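/- arXiv:math/0703676 — 12 statements merged into one kernel-verified Lean document; each statement's English description precedes it below -/
import Mathlib

section
/- Let F be a finite field and A a finite subset of F with |A| ≥ 2. Define the ratio set R = (A−A)/(A−A) = {(a₁−a₂)/(b₁−b₂) : a₁, a₂, b₁, b₂ ∈ A, b₁ ≠ b₂}. If |R| ≥ |A|², then there exist a₁, a₂, b₁, b₂ ∈ A with b₁ ≠ b₂ such that |(a₁−a₂)·A + (b₁−b₂)·A| ≥ |A|²/2. -/
open Pointwise Finset

/-- Cauchy–Schwarz for fibers: `|s|² ≤ |φ(s)| * E` where `E` counts pairs with equal image. -/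
lemma energy_cs {α β : Type*} [DecidableEq α] [DecidableEq β] (s : Finset α) (φ : α → β) :
    s.card ^ 2 ≤ (s.image φ).card * ((s ×ˢ s).filter fun p => φ p.1 = φ p.2).card := by
  classical
  set T := s.image φ with hT
  set f : β → ℕ := fun v => (s.filter fun x => φ x = v).card with hf
  have hsum : ∑ v ∈ T, f v = s.card :=
    (Finset.card_eq_sum_card_fiberwise (fun x hx => Finset.mem_image_of_mem φ hx)).symm
  have hE : ((s ×ˢ s).filter fun p => φ p.1 = φ p.2) =
      T.biUnion (fun v => (s.filter fun x => φ x = v) ×ˢ (s.filter fun x => φ x = v)) := by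
    ext p
    simp only [Finset.mem_filter, Finset.mem_product, Finset.mem_biUnion, Finset.mem_image, hT]
    constructor
    · rintro ⟨⟨h1, h2⟩, h3⟩
      exact ⟨φ p.1, ⟨p.1, h1, rfl⟩, ⟨h1, rfl⟩, ⟨h2, h3.symm⟩⟩
    · rintro ⟨v, _, ⟨h1, e1⟩, h2, e2⟩
      exact ⟨⟨h1, h2⟩, e1.trans e2.symm⟩
  have hcardE : ((s ×ˢ s).filter fun p => φ p.1 = φ p.2).card = ∑ v ∈ T, f v ^ 2 := by
    rw [hE, Finset.card_biUnion]
    · exact Finset.sum_congr rfl fun v _ => by rw [Finset.card_product, sq]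
    · intro x hx y hy hxy
      refine Finset.disjoint_left.mpr ?_
      rintro p hp hq
      simp only [Finset.mem_product, Finset.mem_filter] at hp hq
      exact hxy (hp.1.2.symm.trans hq.1.2)
  calc s.card ^ 2 = (∑ v ∈ T, f v) ^ 2 := by rw [hsum]
    _ ≤ T.card * ∑ v ∈ T, f v ^ 2 := sq_sum_le_card_mul_sum_sq
    _ = T.card * ((s ×ˢ s).filter fun p => φ p.1 = φ p.2).card := by rw [hcardE]

/-- Lemma 1.1: if the ratio set `(A-A)/(A-A)` has size at least `|A|²`, then there are
`a₁, a₂, b₁, b₂ ∈ A` with `b₁ ≠ b₂` and `|(a₁-a₂)A + (b₁-b₂)A| ≥ |A|²/2`. -/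
theorem garaev_lemma_1_1 {F : Type*} [Field F] [Fintype F] [DecidableEq F]
    (A : Finset F) (hA : 2 ≤ A.card)
    (hR : A.card ^ 2 ≤ ((A - A) / ((A - A).erase 0)).card) :
    ∃ a₁ ∈ A, ∃ a₂ ∈ A, ∃ b₁ ∈ A, ∃ b₂ ∈ A, b₁ ≠ b₂ ∧
      (A.card : ℝ) ^ 2 / 2 ≤ (((a₁ - a₂) • A + (b₁ - b₂) • A).card : ℝ) := by
  classical
  set n := A.card with hn
  set R := (A - A) / ((A - A).erase 0) with hR'
  set S : Finset ((F × F) × (F × F)) := (A ×ˢ A) ×ˢ (A ×ˢ A) with hS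
  set B : F → Finset ((F × F) × (F × F)) := fun ξ =>
    S.filter (fun p => p.1.1 + ξ * p.1.2 = p.2.1 + ξ * p.2.2 ∧ p.1.2 ≠ p.2.2) with hB
  have hScard : S.card = n ^ 4 := by
    simp only [hS, Finset.card_product]; ring
  -- disjointness of the B ξ
  have hdisj : ∀ ξ ∈ R, ∀ ζ ∈ R, ξ ≠ ζ → Disjoint (B ξ) (B ζ) := by
    intro ξ _ ζ _ hne
    refine Finset.disjoint_left.mpr ?_
    rintro p hp hq
    simp only [hB, Finset.mem_filter] at hp hq
    apply hne
    have hb : p.1.2 - p.2.2 ≠ 0 := sub_ne_zero.mpr hp.2.2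
    have h1 : ξ * (p.1.2 - p.2.2) = p.2.1 - p.1.1 := by linear_combination hp.2.1
    have h2 : ζ * (p.1.2 - p.2.2) = p.2.1 - p.1.1 := by linear_combination hq.2.1
    have := h1.trans h2.symm
    exact mul_right_cancel₀ hb this
  -- each B ξ lies inside the off-diagonal part
  have hsub : R.biUnion B ⊆ S.filter (fun p => p.1.2 ≠ p.2.2) := by
    intro p hp
    simp only [Finset.mem_biUnion, hB, Finset.mem_filter] at hp ⊢
    obtain ⟨ξ, _, hps, _, hne⟩ := hp
    exact ⟨hps, hne⟩
  -- the diagonal part is large: card ≥ n^3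
  have hdiag : n ^ 3 ≤ (S.filter (fun p => p.1.2 = p.2.2)).card := by
    have : (A ×ˢ (A ×ˢ A)).card ≤ (S.filter (fun p => p.1.2 = p.2.2)).card := by
      apply Finset.card_le_card_of_injOn (fun q => ((q.1, q.2.2), (q.2.1, q.2.2)))
      · intro q hq
        simp only [Finset.mem_coe, Finset.mem_product] at hq
        simp only [hS, Finset.mem_coe, Finset.mem_filter, Finset.mem_product]
        exact ⟨⟨⟨hq.1, hq.2.2⟩, hq.2.1, hq.2.2⟩, trivial⟩
      · intro q hq q' hq' h
        simp only [Prod.mk.injEq] at h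
        obtain ⟨⟨h1, h2⟩, h3, _⟩ := h
        exact Prod.ext h1 (Prod.ext h3 h2)
    calc n ^ 3 = (A ×ˢ (A ×ˢ A)).card := by
          simp only [Finset.card_product]; ring
      _ ≤ _ := this
  have hoffcard : (S.filter (fun p => p.1.2 ≠ p.2.2)).card + n ^ 3 ≤ n ^ 4 := by
    have hsplit := Finset.card_filter_add_card_filter_not
      (s := S) (p := fun p => p.1.2 = p.2.2)
    have : (S.filter (fun p => ¬ p.1.2 = p.2.2)).card + n ^ 3 ≤ S.card := by omega
    simpa [hScard] using this
  -- sum of B ξ over R is at most n^4 - n^3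
  have hsumB : (∑ ξ ∈ R, (B ξ).card) + n ^ 3 ≤ n ^ 4 := by
    rw [← Finset.card_biUnion hdisj]
    exact le_trans (Nat.add_le_add_right (Finset.card_le_card hsub) _) hoffcard
  -- find good ξ
  have hex : ∃ ξ ∈ R, (B ξ).card + n ≤ n ^ 2 := by
    by_contra h
    push_neg at h
    have hn2 : n ≤ n ^ 2 + 1 := by nlinarith [hA]
    obtain ⟨m, hm⟩ : ∃ m, n ^ 2 + 1 = m + n := ⟨n ^ 2 + 1 - n, by omega⟩
    have hlow : ∀ ξ ∈ R, m ≤ (B ξ).card := by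
      intro ξ hξ
      have := h ξ hξ
      omega
    have hsum2 : R.card * m ≤ ∑ ξ ∈ R, (B ξ).card :=
      Finset.card_nsmul_le_sum R _ _ hlow
    have h1 : n ^ 2 * m ≤ ∑ ξ ∈ R, (B ξ).card :=
      le_trans (Nat.mul_le_mul_right _ hR) hsum2
    have h2 : n ^ 2 * m + n ^ 3 ≤ n ^ 4 := by omega
    nlinarith [h2, hm, hA]
  obtain ⟨ξ, hξR, hξ⟩ := hex
  -- energy bound
  set φ : F × F → F := fun p => p.1 + ξ * p.2 with hφ
  set E := ((A ×ˢ A) ×ˢ (A ×ˢ A)).filter (fun p : (F × F) × (F × F) => φ p.1 = φ p.2) with hE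
  have hEcard : E.card ≤ (B ξ).card + n ^ 2 := by
    have hsplit := Finset.card_filter_add_card_filter_not
      (s := E) (p := fun p : (F × F) × (F × F) => p.1.2 = p.2.2)
    -- off-diagonal part of E is B ξ
    have h1 : (E.filter (fun p => ¬ p.1.2 = p.2.2)).card = (B ξ).card := by
      rw [hE, Finset.filter_filter, hB]
    -- diagonal part has card ≤ n^2
    have h2 : (E.filter (fun p => p.1.2 = p.2.2)).card ≤ n ^ 2 := by
      have : (E.filter (fun p => p.1.2 = p.2.2)).card ≤ (A ×ˢ A).card := by
        apply Finset.card_le_card_of_injOn (fun p => p.1)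
        · intro p hp
          simp only [Finset.mem_coe, hE, Finset.mem_filter, Finset.mem_product] at hp
          exact Finset.mem_product.mpr hp.1.1.1
        · intro p hp q hq hpq
          simp only [Finset.mem_coe, hE, hφ, Finset.mem_filter] at hp hq
          have hp2 : p.2 = p.1 := by
            have hb := hp.2
            have he := hp.1.2
            rw [hb] at he
            have : p.1.1 = p.2.1 := by
              have := add_right_cancel he; exact this
            exact Prod.ext this.symm hb.symm
          have hq2 : q.2 = q.1 := by
            have hb := hq.2
            have he := hq.1.2
            rw [hb] at he
            have : q.1.1 = q.2.1 := add_right_cancel he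
            exact Prod.ext this.symm hb.symm
          have hpq' : p.1 = q.1 := hpq
          exact Prod.ext hpq' (by rw [hp2, hq2, hpq'])
      calc (E.filter (fun p => p.1.2 = p.2.2)).card ≤ (A ×ˢ A).card := this
        _ = n ^ 2 := by rw [Finset.card_product]; ring
    omega
  -- Cauchy-Schwarz
  have hCS := energy_cs (A ×ˢ A) φ
  set T := (A ×ˢ A).image φ with hT
  have hcard2 : (A ×ˢ A).card = n ^ 2 := by rw [Finset.card_product]; ring
  have hmain : n ^ 4 ≤ T.card * (2 * n ^ 2) := by
    have hE2 : E.card ≤ 2 * n ^ 2 := by omega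
    calc n ^ 4 = (n ^ 2) ^ 2 := by ring
      _ = (A ×ˢ A).card ^ 2 := by rw [hcard2]
      _ ≤ T.card * E.card := hCS
      _ ≤ T.card * (2 * n ^ 2) := Nat.mul_le_mul_left _ hE2
  have hTbound : n ^ 2 ≤ 2 * T.card := by
    have hn0 : 0 < n ^ 2 := by positivity
    have : n ^ 2 * n ^ 2 ≤ (2 * T.card) * n ^ 2 := by
      calc n ^ 2 * n ^ 2 = n ^ 4 := by ring
        _ ≤ T.card * (2 * n ^ 2) := hmain
        _ = (2 * T.card) * n ^ 2 := by ring
    exact Nat.le_of_mul_le_mul_right this hn0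
  -- unpack ξ ∈ R
  rw [hR', Finset.mem_div] at hξR
  obtain ⟨d₁, hd₁, d₂, hd₂, hξeq⟩ := hξR
  rw [Finset.mem_erase] at hd₂
  obtain ⟨hd₂0, hd₂mem⟩ := hd₂
  rw [Finset.mem_sub] at hd₁ hd₂mem
  obtain ⟨a₁, ha₁, a₂, ha₂, hda⟩ := hd₁
  obtain ⟨b₁, hb₁, b₂, hb₂, hdb⟩ := hd₂mem
  have hbne : b₁ ≠ b₂ := by
    intro h; apply hd₂0; rw [← hdb, h, sub_self]
  refine ⟨a₁, ha₁, a₂, ha₂, b₁, hb₁, b₂, hb₂, hbne, ?_⟩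
  -- T injects into (a₁-a₂)•A + (b₁-b₂)•A via multiplication by d₂
  have hd2ne : (b₁ - b₂) ≠ 0 := sub_ne_zero.mpr hbne
  have hTle : T.card ≤ ((a₁ - a₂) • A + (b₁ - b₂) • A).card := by
    apply Finset.card_le_card_of_injOn (fun v => (b₁ - b₂) * v)
    · intro v hv
      rw [hT, Finset.mem_coe, Finset.mem_image] at hv
      obtain ⟨p, hp, hpv⟩ := hv
      rw [Finset.mem_product] at hp
      rw [Finset.mem_coe, Finset.mem_add]
      refine ⟨(a₁ - a₂) * p.2, ?_, (b₁ - b₂) * p.1, ?_, ?_⟩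
      · rw [Finset.mem_smul_finset]; exact ⟨p.2, hp.2, by simp [smul_eq_mul]⟩
      · rw [Finset.mem_smul_finset]; exact ⟨p.1, hp.1, by simp [smul_eq_mul]⟩
      · rw [← hpv]
        have hξval : ξ = (a₁ - a₂) / (b₁ - b₂) := by rw [← hξeq, hda, hdb]
        simp only [hφ]
        have hξ' : ξ * (b₁ - b₂) = a₁ - a₂ := by rw [hξval, div_mul_cancel₀ _ hd2ne]
        linear_combination (-p.2) * hξ'
    · intro v _ w _ h
      exact mul_left_cancel₀ hd2ne h
  -- conclude over ℝ
  have hfinal : n ^ 2 ≤ 2 * ((a₁ - a₂) • A + (b₁ - b₂) • A).card := by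
    calc n ^ 2 ≤ 2 * T.card := hTbound
      _ ≤ 2 * ((a₁ - a₂) • A + (b₁ - b₂) • A).card := Nat.mul_le_mul_left _ hTle
  have := Nat.cast_le (α := ℝ) |>.mpr hfinal
  push_cast at this
  linarith
end

section
/- Let F be a finite field and A a nonempty finite subset of F. If x ∈ F does not belong to the ratio set (A−A)/(A−A) = {(a₁−a₂)/(b₁−b₂) : a₁, a₂, b₁, b₂ ∈ A, b₁ ≠ b₂}, then |A + x·A| = |A|². -/
open Pointwise Finset

/-- Lemma 1.2: if `x` is not in the ratio set `(A-A)/(A-A)`, then `|A + xA| = |A|²`. -/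
theorem garaev_lemma_1_2 {F : Type*} [Field F] [Fintype F] [DecidableEq F]
    (A : Finset F) (hA : A.Nonempty) (x : F)
    (hx : x ∉ (A - A) / ((A - A).erase 0)) :
    (A + x • A).card = A.card ^ 2 := by
  have himg : A + x • A = (A ×ˢ A).image (fun p => p.1 + x * p.2) := by
    ext z
    simp only [Finset.mem_add, Finset.mem_image, Finset.mem_product, Finset.mem_smul_finset,
      smul_eq_mul]
    constructor
    · rintro ⟨a, ha, _, ⟨b, hb, rfl⟩, rfl⟩
      exact ⟨(a, b), ⟨ha, hb⟩, rfl⟩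
    · rintro ⟨⟨a, b⟩, ⟨ha, hb⟩, rfl⟩
      exact ⟨a, ha, x * b, ⟨b, hb, rfl⟩, rfl⟩
  rw [himg, Finset.card_image_of_injOn, Finset.card_product, sq]
  rintro ⟨a, b⟩ hab ⟨a', b'⟩ hab' h
  simp only [Finset.mem_coe, Finset.mem_product] at hab hab'
  dsimp at h
  by_cases hbb : b = b'
  · subst hbb
    have : a = a' := by linear_combination h
    simp [this]
  · exfalso
    apply hx
    rw [Finset.mem_div]
    refine ⟨a - a', Finset.sub_mem_sub hab.1 hab'.1, b' - b, ?_, ?_⟩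
    · rw [Finset.mem_erase]
      exact ⟨sub_ne_zero.2 (Ne.symm hbb), Finset.sub_mem_sub hab'.2 hab.2⟩
    · rw [div_eq_iff (sub_ne_zero.2 (Ne.symm hbb))]
      linear_combination h
end

section
/- Let F be a finite field and A a finite subset of F with |A| ≥ 3. Suppose G is a subfield of F such that the ratio set (A−A)/(A−A) = {(a₁−a₂)/(b₁−b₂) : a₁, a₂, b₁, b₂ ∈ A, b₁ ≠ b₂} is contained in G. Then there exist c, d ∈ F such that A ⊆ cG + d := {cg + d : g ∈ G}. -/
open Pointwise Finset

/-- Lemma 1.3: if `|A| ≥ 3` and the ratio set `(A-A)/(A-A)` is contained in a subfield `G`,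
then `A ⊆ cG + d` for some `c, d ∈ F`. -/
theorem garaev_lemma_1_3 {F : Type*} [Field F] [Fintype F] [DecidableEq F]
    (A : Finset F) (hA : 3 ≤ A.card) (G : Subfield F)
    (hG : (((A - A) / ((A - A).erase 0) : Finset F) : Set F) ⊆ (G : Set F)) :
    ∃ c d : F, (A : Set F) ⊆ (fun g => c * g + d) '' (G : Set F) := by
  obtain ⟨b₁, hb₁, b₂, hb₂, hne⟩ := Finset.one_lt_card.mp (show 1 < A.card by omega)
  have hc : b₁ - b₂ ≠ 0 := sub_ne_zero.mpr hne
  refine ⟨b₁ - b₂, b₂, fun a ha => ?_⟩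
  refine ⟨(a - b₂) / (b₁ - b₂), ?_, by field_simp; ring⟩
  apply hG
  simp only [Finset.coe_div, Set.mem_div]
  exact ⟨a - b₂, by exact_mod_cast Finset.sub_mem_sub ha hb₂,
    b₁ - b₂, by exact_mod_cast Finset.mem_erase.mpr ⟨hc, Finset.sub_mem_sub hb₁ hb₂⟩, rfl⟩
end

section
/- Let F be a finite field, A a finite subset of F, and a, b ∈ F such that a·A ∩ b·A is nonempty. Then |a·A + b·A| ≤ |A+A|² / |a·A ∩ b·A|. -/
open Pointwise Finset

/-- Corollary 1.7, first inequality: `|aA + bA| ≤ |A+A|² / |aA ∩ bA|`. -/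
theorem garaev_corollary_1_7_sum {F : Type*} [Field F] [Fintype F] [DecidableEq F]
    (A : Finset F) (a b : F) (h : (a • A ∩ b • A).Nonempty) :
    ((a • A + b • A).card : ℝ) ≤ ((A + A).card : ℝ) ^ 2 / ((a • A ∩ b • A).card : ℝ) := by
  set D := a • A ∩ b • A with hD
  have hDpos : (0 : ℝ) < D.card := by exact_mod_cast h.card_pos
  rw [le_div_iff₀ hDpos]
  have key : (a • A + b • A).card * D.card ≤ (a • A + D).card * (D + b • A).card :=
    Finset.ruzsa_triangle_inequality_add_add_add _ _ _
  have h1 : (a • A + D).card ≤ (A + A).card := by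
    calc (a • A + D).card ≤ (a • A + a • A).card :=
          Finset.card_le_card (Finset.add_subset_add_left inter_subset_left)
      _ = (a • (A + A)).card := by rw [smul_add]
      _ ≤ (A + A).card := Finset.smul_finset_card_le
  have h2 : (D + b • A).card ≤ (A + A).card := by
    calc (D + b • A).card ≤ (b • A + b • A).card :=
          Finset.card_le_card (Finset.add_subset_add_right inter_subset_right)
      _ = (b • (A + A)).card := by rw [smul_add]
      _ ≤ (A + A).card := Finset.smul_finset_card_le
  have : (a • A + b • A).card * D.card ≤ (A + A).card ^ 2 := by
    calc (a • A + b • A).card * D.card ≤ (a • A + D).card * (D + b • A).card := key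
      _ ≤ (A + A).card * (A + A).card := Nat.mul_le_mul h1 h2
      _ = (A + A).card ^ 2 := (sq _).symm
  exact_mod_cast this
end

section
/- Let F be a finite field, A a finite subset of F, and a, b ∈ F such that a·A ∩ b·A is nonempty. Then |a·A − b·A| ≤ |A+A|² / |a·A ∩ b·A|. -/
open Pointwise Finset

lemma garaev_aux_smul_add_card {F : Type*} [Field F] [DecidableEq F] (c : F) (A : Finset F) :
    (c • A + c • A).card ≤ (A + A).card := by
  have hsub : c • A + c • A ⊆ c • (A + A) := by
    intro x hx
    rw [Finset.mem_add] at hx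
    obtain ⟨y, hy, z, hz, rfl⟩ := hx
    rw [Finset.mem_smul_finset] at hy hz ⊢
    obtain ⟨u, hu, rfl⟩ := hy
    obtain ⟨v, hv, rfl⟩ := hz
    exact ⟨u + v, Finset.add_mem_add hu hv, smul_add c u v⟩
  calc (c • A + c • A).card ≤ (c • (A + A)).card := Finset.card_le_card hsub
    _ ≤ (A + A).card := by rw [Finset.smul_finset_def]; exact Finset.card_image_le

/-- Corollary 1.7, second inequality: `|aA − bA| ≤ |A+A|² / |aA ∩ bA|`. -/
theorem garaev_corollary_1_7_diff {F : Type*} [Field F] [Fintype F] [DecidableEq F]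
    (A : Finset F) (a b : F) (h : (a • A ∩ b • A).Nonempty) :
    ((a • A - b • A).card : ℝ) ≤ ((A + A).card : ℝ) ^ 2 / ((a • A ∩ b • A).card : ℝ) := by
  set B := a • A ∩ b • A with hB
  have hBpos : (0 : ℝ) < B.card := by exact_mod_cast h.card_pos
  rw [le_div_iff₀ hBpos]
  have key : (a • A - b • A).card * B.card ≤ (a • A + B).card * (b • A + B).card :=
    Finset.ruzsa_triangle_inequality_sub_add_add _ _ _
  have h1 : (a • A + B).card ≤ (A + A).card :=
    le_trans (Finset.card_le_card (Finset.add_subset_add_left Finset.inter_subset_left))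
      (garaev_aux_smul_add_card a A)
  have h2 : (b • A + B).card ≤ (A + A).card :=
    le_trans (Finset.card_le_card (Finset.add_subset_add_left Finset.inter_subset_right))
      (garaev_aux_smul_add_card b A)
  have : (a • A - b • A).card * B.card ≤ (A + A).card ^ 2 := by
    calc (a • A - b • A).card * B.card ≤ (a • A + B).card * (b • A + B).card := key
      _ ≤ (A + A).card ^ 2 := by rw [sq]; exact Nat.mul_le_mul h1 h2
  exact_mod_cast this
end

section
/- Let F be a finite field, A a nonempty finite subset of F, and a₁, a₂, b ∈ F with a₁ ≠ 0, a₂ ≠ 0, b ≠ 0, such that a₁·A ∩ b·A and a₂·A ∩ b·A are nonempty. Then |a₁a₂·A + b²·A| ≤ |A+A|⁴ / (|a₁·A ∩ b·A| · |a₂·A ∩ b·A| · |A|). -/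
open Pointwise Finset

private lemma card_smul₀ {F : Type*} [Field F] [DecidableEq F] {a : F} (ha : a ≠ 0)
    (A : Finset F) : (a • A).card = A.card := by
  rw [Finset.smul_finset_def]
  exact Finset.card_image_of_injective _ (MulAction.injective₀ ha)

/-- Corollary 1.8, first inequality:
`|a₁a₂A + b²A| ≤ |A+A|⁴ / (|a₁A ∩ bA| |a₂A ∩ bA| |A|)`. -/
theorem garaev_corollary_1_8_sum {F : Type*} [Field F] [Fintype F] [DecidableEq F]
    (A : Finset F) (hA : A.Nonempty) (a₁ a₂ b : F)
    (ha₁ : a₁ ≠ 0) (ha₂ : a₂ ≠ 0) (hb : b ≠ 0)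
    (h₁ : (a₁ • A ∩ b • A).Nonempty) (h₂ : (a₂ • A ∩ b • A).Nonempty) :
    (((a₁ * a₂) • A + (b ^ 2) • A).card : ℝ) ≤
      ((A + A).card : ℝ) ^ 4 /
        (((a₁ • A ∩ b • A).card : ℝ) * ((a₂ • A ∩ b • A).card : ℝ) * (A.card : ℝ)) := by
  set S := (a₁ * a₂) • A + (b ^ 2) • A with hS
  set B₁ := a₁ • A ∩ b • A with hB₁
  set B₂ := a₂ • A ∩ b • A with hB₂
  -- Ruzsa 1: middle set a₂ • B₁
  have r1 := Finset.ruzsa_triangle_inequality_add_add_add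
    ((a₁ * a₂) • A) (a₂ • B₁) ((b ^ 2) • A)
  -- bound |a₁a₂A + a₂B₁| ≤ |A+A|
  have e1 : ((a₁ * a₂) • A + a₂ • B₁).card ≤ (A + A).card := by
    have hsub : (a₁ * a₂) • A + a₂ • B₁ ⊆ (a₁ * a₂) • (A + A) := by
      have : a₂ • B₁ ⊆ (a₁ * a₂) • A := by
        calc a₂ • B₁ ⊆ a₂ • (a₁ • A) :=
              Finset.smul_finset_subset_smul_finset (Finset.inter_subset_left)
          _ = (a₁ * a₂) • A := by rw [smul_smul, mul_comm]
      calc (a₁ * a₂) • A + a₂ • B₁ ⊆ (a₁ * a₂) • A + (a₁ * a₂) • A :=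
            Finset.add_subset_add_left this
        _ = (a₁ * a₂) • (A + A) := (smul_add _ _ _).symm
    calc ((a₁ * a₂) • A + a₂ • B₁).card ≤ ((a₁ * a₂) • (A + A)).card :=
          Finset.card_le_card hsub
      _ = (A + A).card := card_smul₀ (mul_ne_zero ha₁ ha₂) _
  -- bound |a₂B₁ + b²A| ≤ |a₂A + bA|
  have e2 : (a₂ • B₁ + (b ^ 2) • A).card ≤ (a₂ • A + b • A).card := by
    have hsub : a₂ • B₁ + (b ^ 2) • A ⊆ b • (a₂ • A + b • A) := by
      have h1 : a₂ • B₁ ⊆ b • (a₂ • A) := by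
        calc a₂ • B₁ ⊆ a₂ • (b • A) :=
              Finset.smul_finset_subset_smul_finset (Finset.inter_subset_right)
          _ = b • (a₂ • A) := by rw [smul_smul, smul_smul, mul_comm]
      have h2 : (b ^ 2) • A = b • (b • A) := by rw [smul_smul, sq]
      rw [smul_add]
      exact Finset.add_subset_add h1 h2.le
    calc (a₂ • B₁ + (b ^ 2) • A).card ≤ (b • (a₂ • A + b • A)).card :=
          Finset.card_le_card hsub
      _ = (a₂ • A + b • A).card := card_smul₀ hb _
  -- Ruzsa 2: |a₂A + bA| * |B₂| ≤ |A+A|²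
  have r2 : (a₂ • A + b • A).card * B₂.card ≤ (A + A).card * (A + A).card := by
    refine (Finset.ruzsa_triangle_inequality_add_add_add (a₂ • A) B₂ (b • A)).trans ?_
    have e3 : (a₂ • A + B₂).card ≤ (A + A).card := by
      have hsub : a₂ • A + B₂ ⊆ a₂ • (A + A) := by
        rw [smul_add]
        exact Finset.add_subset_add_left (Finset.inter_subset_left)
      exact (Finset.card_le_card hsub).trans_eq (card_smul₀ ha₂ _)
    have e4 : (B₂ + b • A).card ≤ (A + A).card := by
      have hsub : B₂ + b • A ⊆ b • (A + A) := by
        rw [smul_add]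
        exact Finset.add_subset_add_right (Finset.inter_subset_right)
      exact (Finset.card_le_card hsub).trans_eq (card_smul₀ hb _)
    exact Nat.mul_le_mul e3 e4
  have hcB₁ : (a₂ • B₁).card = B₁.card := card_smul₀ ha₂ _
  -- pass to reals
  have hB₁pos : (0 : ℝ) < B₁.card := by exact_mod_cast h₁.card_pos
  have hB₂pos : (0 : ℝ) < B₂.card := by exact_mod_cast h₂.card_pos
  have hApos : (0 : ℝ) < A.card := by exact_mod_cast hA.card_pos
  have hAA : (A.card : ℝ) ≤ (A + A).card := by
    exact_mod_cast Finset.card_le_card_add_right hA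
  have hAApos : (0 : ℝ) < (A + A).card := lt_of_lt_of_le hApos hAA
  have key : (S.card : ℝ) * (B₁.card * B₂.card) ≤ ((A + A).card : ℝ) ^ 3 := by
    have r1' : (S.card : ℝ) * B₁.card ≤ (A + A).card * (a₂ • A + b • A).card := by
      rw [hS]
      calc ((((a₁ * a₂) • A + (b ^ 2) • A).card : ℝ)) * B₁.card
          = (((a₁ * a₂) • A + (b ^ 2) • A).card * (a₂ • B₁).card : ℕ) := by
            rw [hcB₁]; push_cast; ring
        _ ≤ (((a₁ * a₂) • A + a₂ • B₁).card * (a₂ • B₁ + (b ^ 2) • A).card : ℕ) := by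
            exact_mod_cast r1
        _ ≤ ((A + A).card * (a₂ • A + b • A).card : ℕ) := by
            exact_mod_cast Nat.mul_le_mul e1 e2
        _ = ((A + A).card : ℝ) * (a₂ • A + b • A).card := by push_cast; ring
    have r2' : ((a₂ • A + b • A).card : ℝ) * B₂.card ≤ ((A + A).card : ℝ) ^ 2 := by
      calc ((a₂ • A + b • A).card : ℝ) * B₂.card
          = (((a₂ • A + b • A).card * B₂.card : ℕ) : ℝ) := by push_cast; ring
        _ ≤ (((A + A).card * (A + A).card : ℕ) : ℝ) := by exact_mod_cast r2
        _ = ((A + A).card : ℝ) ^ 2 := by push_cast; ring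
    have h5 : (S.card : ℝ) * (B₁.card * B₂.card) =
        ((S.card : ℝ) * B₁.card) * B₂.card := by ring
    rw [h5]
    calc ((S.card : ℝ) * B₁.card) * B₂.card
        ≤ ((A + A).card * (a₂ • A + b • A).card) * B₂.card := by
          apply mul_le_mul_of_nonneg_right r1' hB₂pos.le
      _ = ((A + A).card : ℝ) * ((a₂ • A + b • A).card * B₂.card) := by ring
      _ ≤ ((A + A).card : ℝ) * ((A + A).card : ℝ) ^ 2 :=
          mul_le_mul_of_nonneg_left r2' hAApos.le
      _ = ((A + A).card : ℝ) ^ 3 := by ring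
  rw [le_div_iff₀ (by positivity)]
  calc (S.card : ℝ) * (B₁.card * B₂.card * A.card)
      = ((S.card : ℝ) * (B₁.card * B₂.card)) * A.card := by ring
    _ ≤ ((A + A).card : ℝ) ^ 3 * A.card := mul_le_mul_of_nonneg_right key hApos.le
    _ ≤ ((A + A).card : ℝ) ^ 3 * (A + A).card := mul_le_mul_of_nonneg_left hAA (by positivity)
    _ = ((A + A).card : ℝ) ^ 4 := by ring
end

section
/- Let F be a finite field, A a nonempty finite subset of F, and a₁, a₂, b ∈ F with a₁ ≠ 0, a₂ ≠ 0, b ≠ 0, such that a₁·A ∩ b·A and a₂·A ∩ b·A are nonempty. Then |a₁a₂·A − b²·A| ≤ |A+A|⁴ / (|a₁·A ∩ b·A| · |a₂·A ∩ b·A| · |A|). -/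
open Pointwise Finset

private lemma smul_finset_add_distrib {F : Type*} [Field F] [DecidableEq F]
    (c : F) (s t : Finset F) : c • (s + t) = c • s + c • t := by
  ext x
  simp only [Finset.mem_smul_finset, Finset.mem_add, smul_eq_mul]
  constructor
  · rintro ⟨y, ⟨u, hu, v, hv, rfl⟩, rfl⟩
    exact ⟨c * u, ⟨u, hu, rfl⟩, c * v, ⟨v, hv, rfl⟩, (mul_add c u v).symm⟩
  · rintro ⟨_, ⟨u, hu, rfl⟩, _, ⟨v, hv, rfl⟩, rfl⟩
    exact ⟨u + v, ⟨u, hu, v, hv, rfl⟩, mul_add c u v⟩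

private lemma card_smul_finset_eq {F : Type*} [Field F] [DecidableEq F]
    {c : F} (hc : c ≠ 0) (s : Finset F) : (c • s).card = s.card := by
  rw [show c • s = s.image (c * ·) from rfl]
  exact Finset.card_image_of_injective _ (mul_right_injective₀ hc)

/-- Corollary 1.8, second inequality:
`|a₁a₂A − b²A| ≤ |A+A|⁴ / (|a₁A ∩ bA| |a₂A ∩ bA| |A|)`. -/
theorem garaev_corollary_1_8_diff {F : Type*} [Field F] [Fintype F] [DecidableEq F]
    (A : Finset F) (hA : A.Nonempty) (a₁ a₂ b : F)
    (ha₁ : a₁ ≠ 0) (ha₂ : a₂ ≠ 0) (hb : b ≠ 0)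
    (h₁ : (a₁ • A ∩ b • A).Nonempty) (h₂ : (a₂ • A ∩ b • A).Nonempty) :
    (((a₁ * a₂) • A - (b ^ 2) • A).card : ℝ) ≤
      ((A + A).card : ℝ) ^ 4 /
        (((a₁ • A ∩ b • A).card : ℝ) * ((a₂ • A ∩ b • A).card : ℝ) * (A.card : ℝ)) := by
  set Y₁ := a₁ • A ∩ b • A with hY₁
  set Y₂ := a₂ • A ∩ b • A with hY₂
  set S := A + A with hS
  set D := (a₁ * a₂) • A - (b ^ 2) • A with hD
  set T := a₂ • A + b • A with hT
  -- basic subset facts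
  have hY₁a : Y₁ ⊆ a₁ • A := Finset.inter_subset_left
  have hY₁b : Y₁ ⊆ b • A := Finset.inter_subset_right
  have hY₂a : Y₂ ⊆ a₂ • A := Finset.inter_subset_left
  have hY₂b : Y₂ ⊆ b • A := Finset.inter_subset_right
  -- Step 1: #D * #Y₁ ≤ #S * #T
  have step1 : D.card * Y₁.card ≤ S.card * T.card := by
    have h := Finset.ruzsa_triangle_inequality_sub_add_add
      ((a₁ * a₂) • A) (a₂ • Y₁) ((b ^ 2) • A)
    have hcard : (a₂ • Y₁).card = Y₁.card := card_smul_finset_eq ha₂ _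
    have hsub1 : (a₁ * a₂) • A + a₂ • Y₁ ⊆ (a₁ * a₂) • S := by
      rw [hS, smul_finset_add_distrib]
      apply Finset.add_subset_add_left
      calc a₂ • Y₁ ⊆ a₂ • (a₁ • A) := Finset.smul_finset_subset_smul_finset hY₁a
        _ = (a₁ * a₂) • A := by rw [smul_smul, mul_comm]
    have hsub2 : (b ^ 2) • A + a₂ • Y₁ ⊆ b • T := by
      rw [hT, smul_finset_add_distrib]
      rw [add_comm (b • (a₂ • A))]
      apply Finset.add_subset_add
      · rw [smul_smul, ← sq]
      · calc a₂ • Y₁ ⊆ a₂ • (b • A) := Finset.smul_finset_subset_smul_finset hY₁b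
          _ = b • (a₂ • A) := by rw [smul_smul, mul_comm, ← smul_smul]
    calc D.card * Y₁.card = ((a₁ * a₂) • A - (b ^ 2) • A).card * (a₂ • Y₁).card := by
          rw [hcard]
      _ ≤ ((a₁ * a₂) • A + a₂ • Y₁).card * ((b ^ 2) • A + a₂ • Y₁).card := h
      _ ≤ ((a₁ * a₂) • S).card * (b • T).card :=
          Nat.mul_le_mul (Finset.card_le_card hsub1) (Finset.card_le_card hsub2)
      _ = S.card * T.card := by
          rw [card_smul_finset_eq (mul_ne_zero ha₁ ha₂), card_smul_finset_eq hb]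
  -- Step 2: #T * #Y₂ ≤ #S * #S
  have step2 : T.card * Y₂.card ≤ S.card * S.card := by
    have h := Finset.ruzsa_triangle_inequality_add_add_add (a₂ • A) Y₂ (b • A)
    have hsub1 : a₂ • A + Y₂ ⊆ a₂ • S := by
      rw [hS, smul_finset_add_distrib]
      exact Finset.add_subset_add_left hY₂a
    have hsub2 : Y₂ + b • A ⊆ b • S := by
      rw [hS, smul_finset_add_distrib]
      exact Finset.add_subset_add_right hY₂b
    calc T.card * Y₂.card ≤ (a₂ • A + Y₂).card * (Y₂ + b • A).card := h
      _ ≤ (a₂ • S).card * (b • S).card :=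
          Nat.mul_le_mul (Finset.card_le_card hsub1) (Finset.card_le_card hsub2)
      _ = S.card * S.card := by
          rw [card_smul_finset_eq ha₂, card_smul_finset_eq hb]
  -- A ≤ S
  have hAS : A.card ≤ S.card := Finset.card_le_card_add_right hA
  -- combine in ℕ
  have key : D.card * (Y₁.card * Y₂.card * A.card) ≤ S.card ^ 4 := by
    calc D.card * (Y₁.card * Y₂.card * A.card)
        = (D.card * Y₁.card) * Y₂.card * A.card := by ring
      _ ≤ (S.card * T.card) * Y₂.card * A.card := by
          exact Nat.mul_le_mul_right _ (Nat.mul_le_mul_right _ step1)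
      _ = S.card * (T.card * Y₂.card) * A.card := by ring
      _ ≤ S.card * (S.card * S.card) * S.card := by
          exact Nat.mul_le_mul (Nat.mul_le_mul_left _ step2) hAS
      _ = S.card ^ 4 := by ring
  -- cast to ℝ
  have hY₁pos : (0 : ℝ) < Y₁.card := by exact_mod_cast h₁.card_pos
  have hY₂pos : (0 : ℝ) < Y₂.card := by exact_mod_cast h₂.card_pos
  have hApos : (0 : ℝ) < A.card := by exact_mod_cast hA.card_pos
  rw [le_div_iff₀ (by positivity)]
  calc (D.card : ℝ) * ((Y₁.card : ℝ) * (Y₂.card : ℝ) * (A.card : ℝ))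
      = ((D.card * (Y₁.card * Y₂.card * A.card) : ℕ) : ℝ) := by push_cast; ring
    _ ≤ ((S.card ^ 4 : ℕ) : ℝ) := by exact_mod_cast key
    _ = (S.card : ℝ) ^ 4 := by push_cast; ring
end

section
/- Let F be a finite field and A a finite subset of F with 0 ∉ A and |A| ≥ 2. Then there exist an element b₀ ∈ A, a nonempty subset A₁ ⊆ A, and a real number N ≥ 1 such that: (i) for every a ∈ A₁, N ≤ |b₀·A ∩ a·A| ≤ 2N, and (ii) |A₁| · N ≥ |A|³ / (2 |A·A| · (1 + log₂ |A|)). In particular N ≥ |A|² / (2 |A·A| · (1 + log₂ |A|)). -/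
open Pointwise Finset

/-- Dyadic pigeonhole selection of `b₀`, `A₁`, `N` (inequalities (2.1), (2.2)):
there are `b₀ ∈ A`, a nonempty `A₁ ⊆ A` and `N ≥ 1` with `N ≤ |b₀A ∩ aA| ≤ 2N` for all
`a ∈ A₁`, `|A₁| N ≥ |A|³ / (2|AA|(1 + log₂|A|))` and `N ≥ |A|² / (2|AA|(1 + log₂|A|))`. -/
theorem garaev_pigeonhole {F : Type*} [Field F] [Fintype F] [DecidableEq F]
    (A : Finset F) (h0 : (0 : F) ∉ A) (hA : 2 ≤ A.card) :
    ∃ b₀ ∈ A, ∃ A₁ : Finset F, A₁ ⊆ A ∧ A₁.Nonempty ∧ ∃ N : ℝ, 1 ≤ N ∧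
      (∀ a ∈ A₁, N ≤ ((b₀ • A ∩ a • A).card : ℝ) ∧ ((b₀ • A ∩ a • A).card : ℝ) ≤ 2 * N) ∧
      (A.card : ℝ) ^ 3 / (2 * ((A * A).card : ℝ) * (1 + Real.logb 2 A.card)) ≤
        (A₁.card : ℝ) * N ∧
      (A.card : ℝ) ^ 2 / (2 * ((A * A).card : ℝ) * (1 + Real.logb 2 A.card)) ≤ N := by
  classical
  have hA0 : 0 < A.card := by omega
  have hne : ∀ a ∈ A, a ≠ 0 := fun a ha h => h0 (h ▸ ha)
  have hsub : ∀ b ∈ A, b • A ⊆ A * A := by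
    intro b hb x hx
    rw [Finset.mem_smul_finset] at hx
    obtain ⟨y, hy, rfl⟩ := hx
    exact Finset.mul_mem_mul hb hy
  have hcard_smul : ∀ b ∈ A, (b • A).card = A.card := by
    intro b hb
    rw [Finset.smul_finset_def]
    apply Finset.card_image_of_injective
    intro x y hxy
    simp only [smul_eq_mul] at hxy
    exact mul_left_cancel₀ (hne b hb) hxy
  set g : F → ℕ := fun x => (A.filter fun b => x ∈ b • A).card with hg
  have lemA : ∑ x ∈ A * A, g x = A.card ^ 2 := by
    have h1 : ∑ x ∈ A * A, g x = ∑ b ∈ A, ((A * A).filter fun x => x ∈ b • A).card := by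
      simp_rw [hg, Finset.card_filter]
      rw [Finset.sum_comm]
    rw [h1]
    have h2 : ∀ b ∈ A, ((A * A).filter fun x => x ∈ b • A).card = A.card := by
      intro b hb
      rw [Finset.filter_mem_eq_inter, Finset.inter_eq_right.mpr (hsub b hb)]
      exact hcard_smul b hb
    rw [Finset.sum_congr rfl h2, Finset.sum_const, smul_eq_mul, sq]
  have hinter : ∀ b ∈ A, ∀ a ∈ A, (b • A ∩ a • A).card
      = ∑ x ∈ A * A, (if x ∈ b • A then 1 else 0) * (if x ∈ a • A then 1 else 0) := by
    intro b hb a ha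
    have h1 : b • A ∩ a • A = (A * A).filter fun x => x ∈ b • A ∧ x ∈ a • A := by
      ext x
      simp only [Finset.mem_inter, Finset.mem_filter]
      exact ⟨fun h => ⟨hsub b hb h.1, h⟩, fun h => h.2⟩
    rw [h1, Finset.card_filter]
    apply Finset.sum_congr rfl
    intro x _
    by_cases hb' : x ∈ b • A <;> by_cases ha' : x ∈ a • A <;> simp [hb', ha']
  set S : ℕ := ∑ b ∈ A, ∑ a ∈ A, (b • A ∩ a • A).card with hS
  have lemB : S = ∑ x ∈ A * A, g x ^ 2 := by
    rw [hS]
    rw [Finset.sum_congr rfl fun b hb => Finset.sum_congr rfl fun a ha => hinter b hb a ha]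
    have hgx : ∀ x, g x = ∑ b ∈ A, (if x ∈ b • A then 1 else 0) := by
      intro x; exact Finset.card_filter _ _
    calc ∑ b ∈ A, ∑ a ∈ A, ∑ x ∈ A * A,
          (if x ∈ b • A then 1 else 0) * (if x ∈ a • A then 1 else 0)
        = ∑ b ∈ A, ∑ x ∈ A * A, ∑ a ∈ A,
          (if x ∈ b • A then 1 else 0) * (if x ∈ a • A then 1 else 0) :=
          Finset.sum_congr rfl fun b _ => Finset.sum_comm
      _ = ∑ x ∈ A * A, ∑ b ∈ A, ∑ a ∈ A,
          (if x ∈ b • A then 1 else 0) * (if x ∈ a • A then 1 else 0) := Finset.sum_comm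
      _ = ∑ x ∈ A * A, (∑ b ∈ A, if x ∈ b • A then 1 else 0) *
            (∑ a ∈ A, if x ∈ a • A then 1 else 0) := by
          refine Finset.sum_congr rfl fun x _ => ?_
          rw [Finset.sum_mul_sum]
      _ = ∑ x ∈ A * A, g x ^ 2 :=
          Finset.sum_congr rfl fun x _ => by rw [← hgx, sq]
  have hCS : A.card ^ 4 ≤ (A * A).card * S := by
    calc A.card ^ 4 = (A.card ^ 2) ^ 2 := by ring
      _ = (∑ x ∈ A * A, g x) ^ 2 := by rw [lemA]
      _ ≤ (A * A).card * ∑ x ∈ A * A, g x ^ 2 := sq_sum_le_card_mul_sum_sq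
      _ = (A * A).card * S := by rw [lemB]
  have hAne : A.Nonempty := Finset.card_pos.mp hA0
  obtain ⟨b₀, hb₀, hb₀S⟩ : ∃ b₀ ∈ A, S ≤ A.card * ∑ a ∈ A, (b₀ • A ∩ a • A).card := by
    apply Finset.exists_le_of_sum_le hAne
    rw [Finset.sum_const, ← Finset.mul_sum, smul_eq_mul, hS]
  set c : F → ℕ := fun a => (b₀ • A ∩ a • A).card with hc
  set T : ℕ := ∑ a ∈ A, c a with hT
  have hb₀T : S ≤ A.card * T := hb₀S
  have hc1 : ∀ a ∈ A, 1 ≤ c a := by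
    intro a ha
    rw [hc, Nat.one_le_iff_ne_zero, ← Nat.pos_iff_ne_zero, Finset.card_pos]
    exact ⟨b₀ * a, Finset.mem_inter.mpr ⟨Finset.smul_mem_smul_finset ha,
      by rw [mul_comm]; exact Finset.smul_mem_smul_finset hb₀⟩⟩
  have hcA : ∀ a ∈ A, c a ≤ A.card := by
    intro a ha
    calc c a ≤ (b₀ • A).card := Finset.card_le_card Finset.inter_subset_left
      _ = A.card := hcard_smul b₀ hb₀
  set K : ℕ := Nat.log 2 A.card + 1 with hK
  have hclass : ∀ a ∈ A, Nat.log 2 (c a) < K ∧ 2 ^ Nat.log 2 (c a) ≤ c a ∧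
      c a < 2 ^ (Nat.log 2 (c a) + 1) := by
    intro a ha
    refine ⟨?_, Nat.pow_log_le_self 2 (by have := hc1 a ha; omega),
      Nat.lt_pow_succ_log_self one_lt_two _⟩
    rw [hK]
    have := Nat.log_mono_right (b := 2) (hcA a ha)
    omega
  set C : ℕ → Finset F := fun j => A.filter fun a => Nat.log 2 (c a) = j with hC
  have hTsplit : T = ∑ j ∈ Finset.range K, ∑ a ∈ C j, c a :=
    (Finset.sum_fiberwise_of_maps_to (fun a ha => Finset.mem_range.mpr (hclass a ha).1) c).symm
  obtain ⟨j, hj, hjT⟩ : ∃ j ∈ Finset.range K, T ≤ K * ∑ a ∈ C j, c a := by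
    apply Finset.exists_le_of_sum_le ⟨0, Finset.mem_range.mpr (by omega)⟩
    rw [Finset.sum_const, ← Finset.mul_sum, ← hTsplit, smul_eq_mul, Finset.card_range]
  have hCsum : ∑ a ∈ C j, c a ≤ (C j).card * 2 ^ (j + 1) := by
    rw [← smul_eq_mul]
    apply Finset.sum_le_card_nsmul
    intro a ha
    rw [hC, Finset.mem_filter] at ha
    obtain ⟨haA, hlog⟩ := ha
    have h2 := (hclass a haA).2.2
    rw [hlog] at h2
    omega
  -- main natural-number chain
  have hNat : A.card ^ 4 ≤ (A * A).card * (A.card * (K * ((C j).card * 2 ^ (j + 1)))) := by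
    calc A.card ^ 4 ≤ (A * A).card * S := hCS
      _ ≤ (A * A).card * (A.card * T) := Nat.mul_le_mul_left _ hb₀T
      _ ≤ (A * A).card * (A.card * (K * ∑ a ∈ C j, c a)) :=
          Nat.mul_le_mul_left _ (Nat.mul_le_mul_left _ hjT)
      _ ≤ (A * A).card * (A.card * (K * ((C j).card * 2 ^ (j + 1)))) :=
          Nat.mul_le_mul_left _ (Nat.mul_le_mul_left _ (Nat.mul_le_mul_left _ hCsum))
  -- real-number facts
  have hAcast : (2 : ℝ) ≤ (A.card : ℝ) := by exact_mod_cast hA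
  have hAApos : (0 : ℝ) < ((A * A).card : ℝ) := by
    have : (A * A).Nonempty := hAne.mul hAne
    exact_mod_cast Finset.card_pos.mpr this
  have hlogb1 : (1 : ℝ) ≤ Real.logb 2 A.card := by
    rw [show (1 : ℝ) = Real.logb 2 2 by simp]
    exact Real.logb_le_logb_of_le one_lt_two (by norm_num) (by exact_mod_cast hA)
  have hDpos : (0 : ℝ) < 2 * ((A * A).card : ℝ) * (1 + Real.logb 2 A.card) := by positivity
  have hKle : (K : ℝ) ≤ 1 + Real.logb 2 A.card := by
    rw [hK]
    push_cast
    have h1 : ((2 : ℝ)) ^ Nat.log 2 A.card ≤ (A.card : ℝ) := by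
      exact_mod_cast Nat.pow_log_le_self 2 (by omega)
    have h2 : (Nat.log 2 A.card : ℝ) ≤ Real.logb 2 A.card := by
      have := Real.logb_le_logb_of_le one_lt_two (by positivity) h1
      rwa [Real.logb_pow, Real.logb_self_eq_one one_lt_two, mul_one] at this
    linarith
  have hmain : (A.card : ℝ) ^ 3 ≤ ((C j).card : ℝ) * 2 ^ j *
      (2 * ((A * A).card : ℝ) * (1 + Real.logb 2 A.card)) := by
    have h4 : (A.card : ℝ) ^ 4 ≤ ((A * A).card : ℝ) *
        ((A.card : ℝ) * ((K : ℝ) * (((C j).card : ℝ) * 2 ^ (j + 1)))) := by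
      exact_mod_cast hNat
    have h5 : (A.card : ℝ) * (A.card : ℝ) ^ 3 ≤ (A.card : ℝ) *
        (((C j).card : ℝ) * 2 ^ j * (2 * ((A * A).card : ℝ) * (1 + Real.logb 2 A.card))) := by
      calc (A.card : ℝ) * (A.card : ℝ) ^ 3 = (A.card : ℝ) ^ 4 := by ring
        _ ≤ ((A * A).card : ℝ) * ((A.card : ℝ) * ((K : ℝ) * (((C j).card : ℝ) * 2 ^ (j + 1)))) := h4
        _ = (A.card : ℝ) * (((C j).card : ℝ) * 2 ^ j * (2 * ((A * A).card : ℝ) * (K : ℝ))) := by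
            ring
        _ ≤ (A.card : ℝ) * (((C j).card : ℝ) * 2 ^ j *
            (2 * ((A * A).card : ℝ) * (1 + Real.logb 2 A.card))) := by
            gcongr
    exact le_of_mul_le_mul_left h5 (by linarith)
  have hCne : (C j).Nonempty := by
    rw [← Finset.card_pos]
    by_contra h
    rw [not_lt, Nat.le_zero, Finset.card_eq_zero] at h
    have hT1 : A.card ≤ T := by
      calc A.card = ∑ _a ∈ A, 1 := by simp
        _ ≤ T := Finset.sum_le_sum hc1
    rw [h] at hjT
    simp at hjT
    omega
  refine ⟨b₀, hb₀, C j, Finset.filter_subset _ _, hCne, (2 : ℝ) ^ j,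
    one_le_pow₀ one_le_two, ?_, ?_, ?_⟩
  · intro a ha
    rw [hC, Finset.mem_filter] at ha
    obtain ⟨haA, hlog⟩ := ha
    obtain ⟨-, h1, h2⟩ := hclass a haA
    rw [← hlog]
    constructor
    · exact_mod_cast h1
    · have h3 : (c a : ℝ) ≤ 2 ^ (Nat.log 2 (c a) + 1) := by exact_mod_cast h2.le
      calc ((b₀ • A ∩ a • A).card : ℝ) = (c a : ℝ) := by rw [hc]
        _ ≤ 2 ^ (Nat.log 2 (c a) + 1) := h3
        _ = 2 * 2 ^ Nat.log 2 (c a) := by ring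
  · rw [div_le_iff₀ hDpos]
    exact hmain
  · rw [div_le_iff₀ hDpos]
    have hA1le : ((C j).card : ℝ) ≤ (A.card : ℝ) := by
      exact_mod_cast Finset.card_le_card (Finset.filter_subset _ _)
    have h6 : (A.card : ℝ) * ((A.card : ℝ) ^ 2) ≤ (A.card : ℝ) *
        ((2 : ℝ) ^ j * (2 * ((A * A).card : ℝ) * (1 + Real.logb 2 A.card))) := by
      calc (A.card : ℝ) * (A.card : ℝ) ^ 2 = (A.card : ℝ) ^ 3 := by ring
        _ ≤ ((C j).card : ℝ) * 2 ^ j *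
            (2 * ((A * A).card : ℝ) * (1 + Real.logb 2 A.card)) := hmain
        _ = ((C j).card : ℝ) * (2 ^ j * (2 * ((A * A).card : ℝ) *
            (1 + Real.logb 2 A.card))) := by ring
        _ ≤ (A.card : ℝ) * (2 ^ j * (2 * ((A * A).card : ℝ) *
            (1 + Real.logb 2 A.card))) := by gcongr
    exact le_of_mul_le_mul_left h6 (by linarith)
end

section
/- Let F be a finite field, A a nonempty finite subset of F, b₀ ∈ F with b₀ ≠ 0, N ≥ 1 a real number, and a₁, a₂, b₁, b₂ ∈ F such that |aᵢ·A ∩ b₀·A| ≥ N and |bᵢ·A ∩ b₀·A| ≥ N for i = 1, 2. Then |a₁·A − a₂·A + b₁·A − b₂·A| ≤ |A+A|⁸ / (N⁴ |A|³). -/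
open Pointwise Finset

section Aux

variable {F : Type*} [Field F] [DecidableEq F]

lemma gco_card_smul_le (c : F) (S : Finset F) : (c • S).card ≤ S.card := by
  classical
  rw [show c • S = S.image (c • ·) from rfl]
  exact Finset.card_image_le

lemma gco_card_smul_add_smul_le (c : F) (S T : Finset F) :
    (c • S + c • T).card ≤ (S + T).card := by
  rw [← smul_add]
  exact gco_card_smul_le c (S + T)

/-- Replacement lemma, plus version: replacing `c • A` by `b₀ • A` in a sumset. -/
lemma gco_repl_add (A Z : Finset F) (c b₀ : F) :
    (Z + c • A).card * (c • A ∩ b₀ • A).card ≤ (Z + b₀ • A).card * (A + A).card := by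
  set X := c • A ∩ b₀ • A with hX
  calc (Z + c • A).card * X.card
      ≤ (Z + X).card * (X + c • A).card :=
        Finset.ruzsa_triangle_inequality_add_add_add Z X (c • A)
    _ ≤ (Z + b₀ • A).card * (A + A).card := by
        refine Nat.mul_le_mul ?_ ?_
        · exact Finset.card_le_card (Finset.add_subset_add_left Finset.inter_subset_right)
        · refine le_trans (Finset.card_le_card
            (Finset.add_subset_add_right Finset.inter_subset_left)) ?_
          exact gco_card_smul_add_smul_le c A A

/-- Replacement lemma, minus version. -/
lemma gco_repl_sub (A Z : Finset F) (c b₀ : F) :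
    (Z - c • A).card * (c • A ∩ b₀ • A).card ≤ (Z + b₀ • A).card * (A + A).card := by
  set X := c • A ∩ b₀ • A with hX
  calc (Z - c • A).card * X.card
      ≤ (Z + X).card * (c • A + X).card :=
        Finset.ruzsa_triangle_inequality_sub_add_add Z X (c • A)
    _ ≤ (Z + b₀ • A).card * (A + A).card := by
        refine Nat.mul_le_mul ?_ ?_
        · exact Finset.card_le_card (Finset.add_subset_add_left Finset.inter_subset_right)
        · refine le_trans (Finset.card_le_card
            (Finset.add_subset_add_left Finset.inter_subset_left)) ?_
          exact gco_card_smul_add_smul_le c A A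

end Aux

/-- Key estimate in the first case of the Main Theorem:
`|a₁A − a₂A + b₁A − b₂A| ≤ |A+A|⁸ / (N⁴|A|³)`. -/
theorem garaev_case_one_estimate {F : Type*} [Field F] [Fintype F] [DecidableEq F]
    (A : Finset F) (hA : A.Nonempty) (b₀ : F) (hb₀ : b₀ ≠ 0) (N : ℝ) (hN : 1 ≤ N)
    (a₁ a₂ b₁ b₂ : F)
    (ha₁ : N ≤ ((a₁ • A ∩ b₀ • A).card : ℝ)) (ha₂ : N ≤ ((a₂ • A ∩ b₀ • A).card : ℝ))
    (hb₁ : N ≤ ((b₁ • A ∩ b₀ • A).card : ℝ)) (hb₂ : N ≤ ((b₂ • A ∩ b₀ • A).card : ℝ)) :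
    ((a₁ • A - a₂ • A + b₁ • A - b₂ • A).card : ℝ) ≤
      ((A + A).card : ℝ) ^ 8 / (N ^ 4 * (A.card : ℝ) ^ 3) := by
  classical
  set D := b₀ • A with hD
  have hDne : D.Nonempty := hA.smul_finset
  have hDcard : D.card = A.card := by
    rw [hD, show b₀ • A = A.image (b₀ • ·) from rfl]
    exact Finset.card_image_of_injective _ fun x y h => by
      simpa [smul_eq_mul, hb₀] using mul_left_cancel₀ hb₀ h
  have hN0 : (0:ℝ) < N := lt_of_lt_of_le one_pos hN
  have hm0 : (0:ℝ) < (A.card : ℝ) := by exact_mod_cast hA.card_pos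
  have hK0 : (0:ℝ) ≤ ((A + A).card : ℝ) := Nat.cast_nonneg _
  -- real version of the replacement lemmas
  have repl_add : ∀ (Z : Finset F) (c : F), N ≤ ((c • A ∩ D).card : ℝ) →
      N * ((Z + c • A).card : ℝ) ≤ ((Z + D).card : ℝ) * ((A + A).card : ℝ) := by
    intro Z c hc
    have h1 : N * ((Z + c • A).card : ℝ) ≤
        ((c • A ∩ D).card : ℝ) * ((Z + c • A).card : ℝ) :=
      mul_le_mul_of_nonneg_right hc (Nat.cast_nonneg _)
    have h2 : (((Z + c • A).card * (c • A ∩ D).card : ℕ) : ℝ) ≤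
        (((Z + D).card * (A + A).card : ℕ) : ℝ) := by
      exact_mod_cast gco_repl_add A Z c b₀
    push_cast at h2
    nlinarith [h2]
  have repl_sub : ∀ (Z : Finset F) (c : F), N ≤ ((c • A ∩ D).card : ℝ) →
      N * ((Z - c • A).card : ℝ) ≤ ((Z + D).card : ℝ) * ((A + A).card : ℝ) := by
    intro Z c hc
    have h1 : N * ((Z - c • A).card : ℝ) ≤
        ((c • A ∩ D).card : ℝ) * ((Z - c • A).card : ℝ) :=
      mul_le_mul_of_nonneg_right hc (Nat.cast_nonneg _)
    have h2 : (((Z - c • A).card * (c • A ∩ D).card : ℕ) : ℝ) ≤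
        (((Z + D).card * (A + A).card : ℕ) : ℝ) := by
      exact_mod_cast gco_repl_sub A Z c b₀
    push_cast at h2
    nlinarith [h2]
  -- the chain
  set Z₁ : Finset F := (a₁ • A - a₂ • A) + b₁ • A with hZ₁
  set Z₂ : Finset F := (a₁ • A - a₂ • A) + D with hZ₂
  set Z₃ : Finset F := (a₁ • A + D) + D with hZ₃
  set Z₄ : Finset F := (D + D) + D with hZ₄
  have e1 : Z₁ + D = Z₂ + b₁ • A := add_right_comm _ _ _
  have e2 : Z₂ + D = Z₃ - a₂ • A := by
    rw [hZ₂, hZ₃, sub_eq_add_neg, sub_eq_add_neg]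
    simp only [add_assoc, add_comm, add_left_comm]
  have e3 : Z₃ + D = Z₄ + a₁ • A := by
    rw [hZ₃, hZ₄]
    simp only [add_assoc, add_comm, add_left_comm]
  have h1 : N * ((a₁ • A - a₂ • A + b₁ • A - b₂ • A).card : ℝ) ≤ ((Z₁ + D).card : ℝ) * ((A + A).card : ℝ) :=
    repl_sub Z₁ b₂ hb₂
  have h2 : N * ((Z₁ + D).card : ℝ) ≤ ((Z₂ + D).card : ℝ) * ((A + A).card : ℝ) := by
    rw [e1]; exact repl_add Z₂ b₁ hb₁
  have h3 : N * ((Z₂ + D).card : ℝ) ≤ ((Z₃ + D).card : ℝ) * ((A + A).card : ℝ) := by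
    rw [e2]; exact repl_sub Z₃ a₂ ha₂
  have h4 : N * ((Z₃ + D).card : ℝ) ≤ ((Z₄ + D).card : ℝ) * ((A + A).card : ℝ) := by
    rw [e3]; exact repl_add Z₄ a₁ ha₁
  -- Plünnecke–Ruzsa for `4 • D`
  have hplun : ((Z₄ + D).card : ℝ) * ((A.card : ℝ)) ^ 3 ≤ ((A + A).card : ℝ) ^ 4 := by
    have h4D : (4 : ℕ) • D = Z₄ + D := by
      rw [hZ₄]
      rw [show (4 : ℕ) = 3 + 1 from rfl, succ_nsmul,
        show (3 : ℕ) = 2 + 1 from rfl, succ_nsmul, two_nsmul]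
    have hq := Finset.pluennecke_ruzsa_inequality_nsmul_add hDne D 4
    rw [h4D] at hq
    have hDq : (0:ℚ≥0) < (D.card : ℚ≥0) := by exact_mod_cast hDne.card_pos
    have hq2 : ((Z₄ + D).card : ℚ≥0) * (D.card : ℚ≥0) ^ 3 ≤ ((D + D).card : ℚ≥0) ^ 4 := by
      rw [div_pow] at hq
      rw [← le_div_iff₀ (pow_pos hDq 3)]
      refine hq.trans (le_of_eq ?_)
      field_simp
    have hq3 : (Z₄ + D).card * D.card ^ 3 ≤ (D + D).card ^ 4 := by exact_mod_cast hq2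
    have hDD : (D + D).card ≤ (A + A).card := gco_card_smul_add_smul_le b₀ A A
    have hq4 : (Z₄ + D).card * A.card ^ 3 ≤ (A + A).card ^ 4 := by
      calc (Z₄ + D).card * A.card ^ 3 = (Z₄ + D).card * D.card ^ 3 := by rw [hDcard]
        _ ≤ (D + D).card ^ 4 := hq3
        _ ≤ (A + A).card ^ 4 := Nat.pow_le_pow_left hDD 4
    exact_mod_cast hq4
  -- combine
  rw [le_div_iff₀ (mul_pos (pow_pos hN0 4) (pow_pos hm0 3))]
  have g : N ^ 4 * ((a₁ • A - a₂ • A + b₁ • A - b₂ • A).card : ℝ) ≤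
      ((Z₄ + D).card : ℝ) * ((A + A).card : ℝ) ^ 4 := by
    calc N ^ 4 * ((a₁ • A - a₂ • A + b₁ • A - b₂ • A).card : ℝ)
        = N ^ 3 * (N * ((a₁ • A - a₂ • A + b₁ • A - b₂ • A).card : ℝ)) := by ring
      _ ≤ N ^ 3 * (((Z₁ + D).card : ℝ) * ((A + A).card : ℝ)) :=
          mul_le_mul_of_nonneg_left h1 (pow_nonneg hN0.le 3)
      _ = N ^ 2 * (N * ((Z₁ + D).card : ℝ)) * ((A + A).card : ℝ) := by ring
      _ ≤ N ^ 2 * (((Z₂ + D).card : ℝ) * ((A + A).card : ℝ)) * ((A + A).card : ℝ) := by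
          refine mul_le_mul_of_nonneg_right ?_ hK0
          exact mul_le_mul_of_nonneg_left h2 (pow_nonneg hN0.le 2)
      _ = N * (N * ((Z₂ + D).card : ℝ)) * ((A + A).card : ℝ) ^ 2 := by ring
      _ ≤ N * (((Z₃ + D).card : ℝ) * ((A + A).card : ℝ)) * ((A + A).card : ℝ) ^ 2 := by
          refine mul_le_mul_of_nonneg_right ?_ (pow_nonneg hK0 2)
          exact mul_le_mul_of_nonneg_left h3 hN0.le
      _ = N * ((Z₃ + D).card : ℝ) * ((A + A).card : ℝ) ^ 3 := by ring
      _ ≤ ((Z₄ + D).card : ℝ) * ((A + A).card : ℝ) * ((A + A).card : ℝ) ^ 3 :=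
          mul_le_mul_of_nonneg_right h4 (pow_nonneg hK0 3)
      _ = ((Z₄ + D).card : ℝ) * ((A + A).card : ℝ) ^ 4 := by ring
  calc ((a₁ • A - a₂ • A + b₁ • A - b₂ • A).card : ℝ) * (N ^ 4 * ((A.card : ℝ)) ^ 3)
      = (N ^ 4 * ((a₁ • A - a₂ • A + b₁ • A - b₂ • A).card : ℝ)) * ((A.card : ℝ)) ^ 3 := by
        ring
    _ ≤ (((Z₄ + D).card : ℝ) * ((A + A).card : ℝ) ^ 4) * ((A.card : ℝ)) ^ 3 :=
        mul_le_mul_of_nonneg_right g (pow_nonneg hm0.le 3)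
    _ = (((Z₄ + D).card : ℝ) * ((A.card : ℝ)) ^ 3) * ((A + A).card : ℝ) ^ 4 := by ring
    _ ≤ ((A + A).card : ℝ) ^ 4 * ((A + A).card : ℝ) ^ 4 :=
        mul_le_mul_of_nonneg_right hplun (pow_nonneg hK0 4)
    _ = ((A + A).card : ℝ) ^ 8 := by ring
end

section
/- Let F be a finite field, A a nonempty finite subset of F, b₀ ∈ F with b₀ ≠ 0, N ≥ 1 a real number, and a₁, a₂, b₁, b₂, c₁, c₂, d₁, d₂ ∈ F with b₁ ≠ b₂ and d₁ ≠ d₂, such that each of the eight sets aᵢ·A ∩ b₀·A, bᵢ·A ∩ b₀·A, cᵢ·A ∩ b₀·A, dᵢ·A ∩ b₀·A (i = 1, 2) has cardinality at least N. Then |(b₁−b₂)(d₁−d₂)·A + (b₁−b₂)(c₁−c₂)·A + (a₁−a₂)(d₁−d₂)·A| ≤ C · |A+A|^{17} / (N⁸ |A|⁸) for an absolute constant C > 0. -/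
open Pointwise Finset

namespace GaraevAux
variable {F : Type} [Field F] [DecidableEq F]

lemma card_smul_eq {c : F} (hc : c ≠ 0) (s : Finset F) : (c • s).card = s.card := by
  rw [show c • s = s.image (c * ·) from rfl]
  exact card_image_of_injective _ (mul_right_injective₀ hc)

lemma card_smul_le (c : F) (s : Finset F) : (c • s).card ≤ s.card := by
  rw [show c • s = s.image (c * ·) from rfl]
  exact card_image_le

lemma neg_smul_finset (c : F) (s : Finset F) : (-c) • s = -(c • s) := by
  ext x
  simp only [mem_smul_finset, mem_neg, smul_eq_mul]
  constructor
  · rintro ⟨y, hy, rfl⟩; exact ⟨c*y, ⟨y, hy, rfl⟩, by ring⟩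
  · rintro ⟨z, ⟨y, hy, rfl⟩, rfl⟩; exact ⟨y, hy, by ring⟩

lemma sub_smul_subset (x y : F) (A : Finset F) : (x - y) • A ⊆ x • A + (-y) • A := by
  intro z hz
  rw [mem_smul_finset] at hz
  obtain ⟨p, hp, rfl⟩ := hz
  rw [mem_add]
  refine ⟨x • p, smul_mem_smul_finset hp, (-y) • p, smul_mem_smul_finset hp, ?_⟩
  simp only [smul_eq_mul]; ring

lemma conv_pos (A W : Finset F) (x b₀ : F) :
    (W + x • A).card * (x • A ∩ b₀ • A).card ≤ (W + b₀ • A).card * (A + A).card := by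
  refine (ruzsa_triangle_inequality_add_add_add W (x • A ∩ b₀ • A) (x • A)).trans
    (Nat.mul_le_mul ?_ ?_)
  · exact card_le_card (add_subset_add_left inter_subset_right)
  · calc ((x • A ∩ b₀ • A) + x • A).card
        ≤ (x • A + x • A).card := card_le_card (add_subset_add_right inter_subset_left)
      _ = (x • (A + A)).card := by rw [smul_add]
      _ ≤ (A + A).card := card_smul_le _ _

lemma conv_neg (A W : Finset F) (x b₀ : F) :
    (W + (-x) • A).card * (x • A ∩ b₀ • A).card ≤ (W + (-b₀) • A).card * (A + A).card := by
  have h := ruzsa_triangle_inequality_add_add_add W (-(x • A ∩ b₀ • A)) ((-x) • A)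
  rw [card_neg] at h
  refine h.trans (Nat.mul_le_mul ?_ ?_)
  · refine card_le_card (add_subset_add_left ?_)
    rw [neg_smul_finset]
    exact neg_subset_neg inter_subset_right
  · calc (-(x • A ∩ b₀ • A) + (-x) • A).card
        ≤ ((-x) • A + (-x) • A).card := by
          refine card_le_card (add_subset_add_right ?_)
          rw [neg_smul_finset]
          exact neg_subset_neg inter_subset_left
      _ = ((-x) • (A + A)).card := by rw [smul_add]
      _ ≤ (A + A).card := card_smul_le _ _

lemma petridis_choice (B X : Finset F) (hB : B.Nonempty) :
    ∃ Z : Finset F, Z.Nonempty ∧ Z ⊆ B ∧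
      (∀ Z' ⊆ B, Z'.Nonempty → (Z + X).card * Z'.card ≤ (Z' + X).card * Z.card) ∧
      (∀ C : Finset F, (Z + X + C).card * Z.card ≤ (Z + X).card * (Z + C).card) := by
  obtain ⟨Z, hZmem, hZmin⟩ := exists_min_image (B.powerset.erase ∅)
    (fun Z => ((Z + X).card : ℚ≥0) / Z.card)
    ⟨B, mem_erase_of_ne_of_mem hB.ne_empty (mem_powerset_self _)⟩
  rw [mem_erase, mem_powerset, ← nonempty_iff_ne_empty] at hZmem
  obtain ⟨hZne, hZB⟩ := hZmem
  have key : ∀ Z' ⊆ B, Z'.Nonempty → (Z + X).card * Z'.card ≤ (Z' + X).card * Z.card := by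
    intro Z' hZ'B hZ'ne
    have hmin := hZmin Z' (mem_erase_of_ne_of_mem hZ'ne.ne_empty (mem_powerset.2 hZ'B))
    have hz : (0:ℚ≥0) < Z.card := by exact_mod_cast hZne.card_pos
    have hz' : (0:ℚ≥0) < Z'.card := by exact_mod_cast hZ'ne.card_pos
    exact_mod_cast (div_le_div_iff₀ hz hz').1 hmin
  refine ⟨Z, hZne, hZB, key, fun C => ?_⟩
  rw [show Z + X + C = C + Z + X by abel, add_comm Z C]
  refine pluennecke_petridis_inequality_add C ?_
  intro Z' hZ'
  obtain rfl | hne := Z'.eq_empty_or_nonempty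
  · simp
  · exact key Z' (hZ'.trans hZB) hne

lemma nat_le_mul_div {p q r s : ℕ} (h : p * s ≤ q * r) (hs : 0 < s) :
    (p:ℝ) ≤ (q:ℝ) * (r:ℝ) / (s:ℝ) := by
  rw [le_div_iff₀ (by exact_mod_cast hs)]
  exact_mod_cast h

lemma nat_div_le_div {p q r s : ℕ} (h : p * s ≤ q * r) (hr : 0 < r) (hs : 0 < s) :
    (p:ℝ)/(r:ℝ) ≤ (q:ℝ)/(s:ℝ) := by
  rw [div_le_div_iff₀ (by exact_mod_cast hr) (by exact_mod_cast hs)]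
  exact_mod_cast h

end GaraevAux
set_option maxHeartbeats 1000000 in
/-- Key estimate in the second case of the Main Theorem: for an absolute constant `C > 0`,
`|(b₁−b₂)(d₁−d₂)A + (b₁−b₂)(c₁−c₂)A + (a₁−a₂)(d₁−d₂)A| ≤ C|A+A|¹⁷/(N⁸|A|⁸)`. -/
theorem garaev_case_two_estimate :
    ∃ C : ℝ, 0 < C ∧
      ∀ (F : Type) [Field F] [Fintype F] [DecidableEq F]
        (A : Finset F), A.Nonempty →
        ∀ (b₀ : F), b₀ ≠ 0 → ∀ (N : ℝ), 1 ≤ N →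
        ∀ a₁ a₂ b₁ b₂ c₁ c₂ d₁ d₂ : F, b₁ ≠ b₂ → d₁ ≠ d₂ →
        N ≤ ((a₁ • A ∩ b₀ • A).card : ℝ) → N ≤ ((a₂ • A ∩ b₀ • A).card : ℝ) →
        N ≤ ((b₁ • A ∩ b₀ • A).card : ℝ) → N ≤ ((b₂ • A ∩ b₀ • A).card : ℝ) →
        N ≤ ((c₁ • A ∩ b₀ • A).card : ℝ) → N ≤ ((c₂ • A ∩ b₀ • A).card : ℝ) →
        N ≤ ((d₁ • A ∩ b₀ • A).card : ℝ) → N ≤ ((d₂ • A ∩ b₀ • A).card : ℝ) →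
        ((((b₁ - b₂) * (d₁ - d₂)) • A + ((b₁ - b₂) * (c₁ - c₂)) • A +
            ((a₁ - a₂) * (d₁ - d₂)) • A).card : ℝ) ≤
          C * ((A + A).card : ℝ) ^ 17 / (N ^ 8 * (A.card : ℝ) ^ 8) := by
  refine ⟨1, one_pos, ?_⟩
  intro F _ _ _ A hA b₀ hb₀ N hN a₁ a₂ b₁ b₂ c₁ c₂ d₁ d₂ hb hd
  intro hNa₁ hNa₂ hNb₁ hNb₂ hNc₁ hNc₂ hNd₁ hNd₂
  rw [one_mul]
  set S := (A + A).card with hSdef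
  set a := A.card with hadef
  have ha0 : 0 < a := hA.card_pos
  have haS : a ≤ S := card_le_card_add_left hA
  have hS0 : 0 < S := lt_of_lt_of_le ha0 haS
  have hN0 : (0:ℝ) < N := lt_of_lt_of_le one_pos hN
  by_cases hd₁ : d₁ = 0
  · -- degenerate case : N = 1
    have hIle : ((d₁ • A ∩ b₀ • A).card : ℝ) ≤ 1 := by
      subst hd₁
      have h1 : (0:F) • A ∩ b₀ • A ⊆ (0:F) • A := inter_subset_left
      have h2 : ((0:F) • A).card ≤ 1 := by
        rw [zero_smul_finset hA]
        simp
      exact_mod_cast (card_le_card h1).trans h2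
    have hN1 : N = 1 := le_antisymm (hNd₁.trans hIle) hN
    have hT3 : (((b₁ - b₂) * (d₁ - d₂)) • A + ((b₁ - b₂) * (c₁ - c₂)) • A +
        ((a₁ - a₂) * (d₁ - d₂)) • A).card ≤ a * a * a := by
      calc (((b₁ - b₂) * (d₁ - d₂)) • A + ((b₁ - b₂) * (c₁ - c₂)) • A +
            ((a₁ - a₂) * (d₁ - d₂)) • A).card
          ≤ (((b₁ - b₂) * (d₁ - d₂)) • A + ((b₁ - b₂) * (c₁ - c₂)) • A).card *
              (((a₁ - a₂) * (d₁ - d₂)) • A).card := card_add_le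
        _ ≤ ((((b₁ - b₂) * (d₁ - d₂)) • A).card * ((((b₁ - b₂) * (c₁ - c₂)) • A).card)) *
              (((a₁ - a₂) * (d₁ - d₂)) • A).card := Nat.mul_le_mul_right _ card_add_le
        _ ≤ (a * a) * a := by
            refine Nat.mul_le_mul (Nat.mul_le_mul ?_ ?_) ?_ <;>
              exact GaraevAux.card_smul_le _ _
    rw [hN1]
    rw [one_pow, one_mul, le_div_iff₀ (by positivity)]
    have : ((((b₁ - b₂) * (d₁ - d₂)) • A + ((b₁ - b₂) * (c₁ - c₂)) • A +
        ((a₁ - a₂) * (d₁ - d₂)) • A).card) * a ^ 8 ≤ S ^ 17 := by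
      calc (((b₁ - b₂) * (d₁ - d₂)) • A + ((b₁ - b₂) * (c₁ - c₂)) • A +
            ((a₁ - a₂) * (d₁ - d₂)) • A).card * a ^ 8
          ≤ (a * a * a) * a ^ 8 := Nat.mul_le_mul_right _ hT3
        _ = a ^ 11 := by ring
        _ ≤ S ^ 11 := Nat.pow_le_pow_left haS _
        _ ≤ S ^ 17 := Nat.pow_le_pow_right hS0 (by norm_num)
    exact_mod_cast this
  · -- main case
    have hl : b₁ - b₂ ≠ 0 := sub_ne_zero.2 hb
    have hbt : d₁ - d₂ ≠ 0 := sub_ne_zero.2 hd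
    set u := (b₁ - b₂) * (d₁ - d₂) with hud
    set v := (b₁ - b₂) * (c₁ - c₂) with hvd
    set w := (a₁ - a₂) * (d₁ - d₂) with hwd
    have hu : u ≠ 0 := mul_ne_zero hl hbt
    set P := b₀ • A with hPd
    set Pm := (-b₀) • A with hPmd
    set Ia₁ := (a₁ • A ∩ b₀ • A).card with hIa₁d
    set Ia₂ := (a₂ • A ∩ b₀ • A).card with hIa₂d
    set Ib₁ := (b₁ • A ∩ b₀ • A).card with hIb₁d
    set Ib₂ := (b₂ • A ∩ b₀ • A).card with hIb₂d
    set Ic₁ := (c₁ • A ∩ b₀ • A).card with hIc₁d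
    set Ic₂ := (c₂ • A ∩ b₀ • A).card with hIc₂d
    set Id₁ := (d₁ • A ∩ b₀ • A).card with hId₁d
    set Id₂ := (d₂ • A ∩ b₀ • A).card with hId₂d
    have hone : ∀ {n : ℕ}, N ≤ (n : ℝ) → 0 < n := fun h => by exact_mod_cast hN.trans h
    have hIa₁0 := hone hNa₁
    have hIa₂0 := hone hNa₂
    have hIb₁0 := hone hNb₁
    have hIb₂0 := hone hNb₂
    have hIc₁0 := hone hNc₁
    have hIc₂0 := hone hNc₂
    have hId₁0 := hone hNd₁
    have hId₂0 := hone hNd₂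
    -- the special subset A'
    set A' := d₁⁻¹ • (d₁ • A ∩ b₀ • A) with hA'd
    have hA'A : A' ⊆ A := by
      have h := smul_finset_subset_smul_finset (a := d₁⁻¹)
        (inter_subset_left : d₁ • A ∩ b₀ • A ⊆ _)
      rwa [smul_smul, inv_mul_cancel₀ hd₁, one_smul] at h
    have hd₁A' : d₁ • A' ⊆ P := by
      rw [hA'd, smul_smul, mul_inv_cancel₀ hd₁, one_smul]
      exact inter_subset_right
    have hA'card : A'.card = Id₁ := GaraevAux.card_smul_eq (inv_ne_zero hd₁) _
    have hA'ne : A'.Nonempty := card_pos.1 (by rw [hA'card]; exact hId₁0)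
    clear_value A'
    -- Petridis minimizers
    have huAne : (u • A).Nonempty := hA.smul_finset
    obtain ⟨Z₁, hZ₁ne, hZ₁sub, hZ₁min, hZ₁pet⟩ := GaraevAux.petridis_choice (u • A) (v • A) huAne
    obtain ⟨Z₂, hZ₂ne, hZ₂sub, hZ₂min, hZ₂pet⟩ := GaraevAux.petridis_choice (u • A) (u • A) huAne
    set z₁ := Z₁.card with hz₁d
    set m₁ := (Z₁ + v • A).card with hm₁d
    set z₂ := Z₂.card with hz₂d
    set m₂ := (Z₂ + u • A).card with hm₂d
    have hz₁0 : 0 < z₁ := hZ₁ne.card_pos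
    have hz₂0 : 0 < z₂ := hZ₂ne.card_pos
    set t := (u • A + v • A + w • A).card with htd
    set Y₁ := (Z₁ + (w • A + u • A)).card with hY₁d
    set Y₂ := (Z₂ + (Z₁ + w • A)).card with hY₂d
    set C₂ := (u • A + w • A).card with hC₂d
    set M₁ := (u • A' + v • A).card with hM₁d
    -- step chain
    have N1 : t * z₁ ≤ m₁ * Y₁ := by
      have h1 : t ≤ (Z₁ + v • A + (w • A + u • A)).card := by
        have e : u • A + v • A + w • A = v • A + (w • A + u • A) := by abel
        have e2 : Z₁ + v • A + (w • A + u • A) = Z₁ + (v • A + (w • A + u • A)) :=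
          add_assoc _ _ _
        rw [htd, e, e2]
        exact card_le_card_add_left hZ₁ne
      calc t * z₁ ≤ (Z₁ + v • A + (w • A + u • A)).card * z₁ := Nat.mul_le_mul_right _ h1
        _ ≤ m₁ * Y₁ := hZ₁pet _
    have N2 : Y₁ * z₂ ≤ m₂ * Y₂ := by
      have h1 : Y₁ ≤ (Z₂ + u • A + (Z₁ + w • A)).card := by
        have e : Z₂ + u • A + (Z₁ + w • A) = Z₂ + (Z₁ + (w • A + u • A)) := by abel
        rw [hY₁d, e]
        exact card_le_card_add_left hZ₂ne
      calc Y₁ * z₂ ≤ (Z₂ + u • A + (Z₁ + w • A)).card * z₂ := Nat.mul_le_mul_right _ h1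
        _ ≤ m₂ * Y₂ := hZ₂pet _
    have N3 : Y₂ * z₂ ≤ m₂ * C₂ := by
      have h1 : Y₂ ≤ (Z₂ + u • A + w • A).card := by
        refine card_le_card ?_
        have e : Z₂ + (Z₁ + w • A) = Z₂ + Z₁ + w • A := (add_assoc _ _ _).symm
        rw [e]
        exact add_subset_add_right (add_subset_add_left hZ₁sub)
      calc Y₂ * z₂ ≤ (Z₂ + u • A + w • A).card * z₂ := Nat.mul_le_mul_right _ h1
        _ ≤ m₂ * (Z₂ + w • A).card := hZ₂pet _
        _ ≤ m₂ * C₂ := Nat.mul_le_mul_left _ (card_le_card (add_subset_add_right hZ₂sub))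
    have N4 : m₁ * Id₁ ≤ M₁ * z₁ := by
      have h := hZ₁min (u • A') (smul_finset_subset_smul_finset hA'A) hA'ne.smul_finset
      rwa [GaraevAux.card_smul_eq hu, hA'card] at h
    have N5 : m₂ * a ≤ S * z₂ := by
      have h := hZ₂min (u • A) subset_rfl huAne
      rwa [GaraevAux.card_smul_eq hu, show (u • A + u • A).card = S by
        rw [← smul_add, GaraevAux.card_smul_eq hu]] at h
    -- M₁ : factor out (b₁ - b₂) and expand
    have hM₁eq : M₁ = ((d₁ - d₂) • A' + (c₁ - c₂) • A).card := by
      have e : u • A' + v • A = (b₁ - b₂) • ((d₁ - d₂) • A' + (c₁ - c₂) • A) := by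
        rw [hud, hvd, smul_add, smul_smul, smul_smul]
      rw [hM₁d, e, GaraevAux.card_smul_eq hl]
    have hM₁sub : (d₁ - d₂) • A' + (c₁ - c₂) • A ⊆ (P + (-d₂) • A) + (c₁ • A + (-c₂) • A) := by
      refine add_subset_add ?_ (GaraevAux.sub_smul_subset c₁ c₂ A)
      exact (GaraevAux.sub_smul_subset d₁ d₂ A').trans
        (add_subset_add hd₁A' (smul_finset_subset_smul_finset hA'A))
    have N6a : M₁ ≤ ((P + (-d₂) • A) + (c₁ • A + (-c₂) • A)).card := by
      rw [hM₁eq]; exact card_le_card hM₁sub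
    have N6b : ((P + (-d₂) • A) + (c₁ • A + (-c₂) • A)).card * Id₂
        ≤ ((P + (c₁ • A + (-c₂) • A)) + Pm).card * S := by
      have e : (P + (-d₂) • A) + (c₁ • A + (-c₂) • A)
          = (P + (c₁ • A + (-c₂) • A)) + (-d₂) • A := by abel
      rw [e]
      exact GaraevAux.conv_neg A _ d₂ b₀
    have N6c : ((P + (c₁ • A + (-c₂) • A)) + Pm).card * Ic₁
        ≤ ((P + ((-c₂) • A + Pm)) + P).card * S := by
      have e : (P + (c₁ • A + (-c₂) • A)) + Pm = (P + ((-c₂) • A + Pm)) + c₁ • A := by abel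
      rw [e]
      exact GaraevAux.conv_pos A _ c₁ b₀
    have N6d : ((P + ((-c₂) • A + Pm)) + P).card * Ic₂
        ≤ ((P + (Pm + P)) + Pm).card * S := by
      have e : (P + ((-c₂) • A + Pm)) + P = (P + (Pm + P)) + (-c₂) • A := by abel
      rw [e]
      exact GaraevAux.conv_neg A _ c₂ b₀
    set Q := ((P + (Pm + P)) + Pm).card with hQd
    -- C₂ : factor out (d₁ - d₂) and expand
    have hC₂eq : C₂ = ((b₁ - b₂) • A + (a₁ - a₂) • A).card := by
      have e : u • A + w • A = (d₁ - d₂) • ((b₁ - b₂) • A + (a₁ - a₂) • A) := by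
        rw [hud, hwd, smul_add, smul_smul, smul_smul, mul_comm (d₁ - d₂) (b₁ - b₂),
          mul_comm (d₁ - d₂) (a₁ - a₂)]
      rw [hC₂d, e, GaraevAux.card_smul_eq hbt]
    have hC₂sub : (b₁ - b₂) • A + (a₁ - a₂) • A
        ⊆ (b₁ • A + (-b₂) • A) + (a₁ • A + (-a₂) • A) :=
      add_subset_add (GaraevAux.sub_smul_subset b₁ b₂ A) (GaraevAux.sub_smul_subset a₁ a₂ A)
    have N7a : C₂ ≤ ((b₁ • A + (-b₂) • A) + (a₁ • A + (-a₂) • A)).card := by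
      rw [hC₂eq]; exact card_le_card hC₂sub
    have N7b : ((b₁ • A + (-b₂) • A) + (a₁ • A + (-a₂) • A)).card * Ib₁
        ≤ (((-b₂) • A + (a₁ • A + (-a₂) • A)) + P).card * S := by
      have e : (b₁ • A + (-b₂) • A) + (a₁ • A + (-a₂) • A)
          = ((-b₂) • A + (a₁ • A + (-a₂) • A)) + b₁ • A := by abel
      rw [e]
      exact GaraevAux.conv_pos A _ b₁ b₀
    have N7c : (((-b₂) • A + (a₁ • A + (-a₂) • A)) + P).card * Ib₂
        ≤ ((a₁ • A + ((-a₂) • A + P)) + Pm).card * S := by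
      have e : ((-b₂) • A + (a₁ • A + (-a₂) • A)) + P
          = (a₁ • A + ((-a₂) • A + P)) + (-b₂) • A := by abel
      rw [e]
      exact GaraevAux.conv_neg A _ b₂ b₀
    have N7d : ((a₁ • A + ((-a₂) • A + P)) + Pm).card * Ia₁
        ≤ (((-a₂) • A + (P + Pm)) + P).card * S := by
      have e : a₁ • A + ((-a₂) • A + P) + Pm = ((-a₂) • A + (P + Pm)) + a₁ • A := by abel
      rw [e]
      exact GaraevAux.conv_pos A _ a₁ b₀
    have N7e : (((-a₂) • A + (P + Pm)) + P).card * Ia₂ ≤ Q * S := by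
      have e : ((-a₂) • A + (P + Pm)) + P = (P + (Pm + P)) + (-a₂) • A := by abel
      rw [hQd, e]
      exact GaraevAux.conv_neg A _ a₂ b₀
    -- Plünnecke–Ruzsa for the base set P = b₀ • A
    have hPne : P.Nonempty := hA.smul_finset
    have hPP : (P + P).card = S := by
      rw [hPd, ← smul_add, GaraevAux.card_smul_eq hb₀]
    have hPa : P.card = a := GaraevAux.card_smul_eq hb₀ A
    have hPmP : Pm = -P := by rw [hPmd, hPd]; exact GaraevAux.neg_smul_finset b₀ A
    have hQeq : (P + (Pm + P)) + Pm = 2 • P - 2 • P := by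
      rw [hPmP, two_nsmul, sub_eq_add_neg, neg_add, add_comm (-P) P, ← add_assoc,
        add_assoc (P + P)]
    have N8 : Q * a ^ 3 ≤ S ^ 4 := by
      have hPR := pluennecke_ruzsa_inequality_nsmul_sub_nsmul_add hPne P 2 2
      rw [← hQeq, hPP, hPa] at hPR
      have ha0' : ((a : ℚ≥0)) ≠ 0 := by exact_mod_cast ha0.ne'
      have hq : ((Q * a ^ 3 : ℕ) : ℚ≥0) ≤ ((S ^ 4 : ℕ) : ℚ≥0) := by
        push_cast
        calc (Q : ℚ≥0) * (a : ℚ≥0) ^ 3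
            ≤ (((S : ℚ≥0) / a) ^ (2 + 2) * a) * (a : ℚ≥0) ^ 3 := by
              exact mul_le_mul_left (by rw [hQd]; exact_mod_cast hPR) _
          _ = (S : ℚ≥0) ^ 4 := by
              rw [div_pow]
              field_simp
              ring
      exact_mod_cast hq
    clear_value S a u v w P Pm Ia₁ Ia₂ Ib₁ Ib₂ Ic₁ Ic₂ Id₁ Id₂ z₁ m₁ z₂ m₂ t Y₁ Y₂ C₂ M₁ Q
    have haRne : ((a:ℝ)) ≠ 0 := by exact_mod_cast ha0.ne'
    have hIa₁ne : ((Ia₁:ℝ)) ≠ 0 := by exact_mod_cast hIa₁0.ne'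
    have hIa₂ne : ((Ia₂:ℝ)) ≠ 0 := by exact_mod_cast hIa₂0.ne'
    have hIb₁ne : ((Ib₁:ℝ)) ≠ 0 := by exact_mod_cast hIb₁0.ne'
    have hIb₂ne : ((Ib₂:ℝ)) ≠ 0 := by exact_mod_cast hIb₂0.ne'
    have hIc₁ne : ((Ic₁:ℝ)) ≠ 0 := by exact_mod_cast hIc₁0.ne'
    have hIc₂ne : ((Ic₂:ℝ)) ≠ 0 := by exact_mod_cast hIc₂0.ne'
    have hId₁ne : ((Id₁:ℝ)) ≠ 0 := by exact_mod_cast hId₁0.ne'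
    have hId₂ne : ((Id₂:ℝ)) ≠ 0 := by exact_mod_cast hId₂0.ne'
    -- pass to the reals
    have hN0' : (0:ℝ) ≤ N := hN0.le
    have e1 : (t:ℝ) ≤ m₁ * Y₁ / z₁ := GaraevAux.nat_le_mul_div N1 hz₁0
    have e2 : (Y₁:ℝ) ≤ m₂ * Y₂ / z₂ := GaraevAux.nat_le_mul_div N2 hz₂0
    have e3 : (Y₂:ℝ) ≤ m₂ * C₂ / z₂ := GaraevAux.nat_le_mul_div N3 hz₂0
    have f4 : (m₁:ℝ) / z₁ ≤ (M₁:ℝ) / Id₁ := GaraevAux.nat_div_le_div N4 hz₁0 hId₁0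
    have f5 : (m₂:ℝ) / z₂ ≤ (S:ℝ) / a := GaraevAux.nat_div_le_div N5 hz₂0 ha0
    have g1 : (((P + (-d₂) • A) + (c₁ • A + (-c₂) • A)).card : ℝ)
        ≤ ((P + (c₁ • A + (-c₂) • A)) + Pm).card * S / Id₂ :=
      GaraevAux.nat_le_mul_div N6b hId₂0
    have g2 : ((((P + (c₁ • A + (-c₂) • A)) + Pm)).card : ℝ)
        ≤ ((P + ((-c₂) • A + Pm)) + P).card * S / Ic₁ :=
      GaraevAux.nat_le_mul_div N6c hIc₁0
    have g3 : (((P + ((-c₂) • A + Pm)) + P).card : ℝ) ≤ Q * S / Ic₂ :=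
      GaraevAux.nat_le_mul_div N6d hIc₂0
    have boundM : (M₁:ℝ) ≤ ((Q * S / Ic₂) * S / Ic₁) * S / Id₂ := by
      calc (M₁:ℝ) ≤ (((P + (-d₂) • A) + (c₁ • A + (-c₂) • A)).card : ℝ) := by
            exact_mod_cast N6a
        _ ≤ ((P + (c₁ • A + (-c₂) • A)) + Pm).card * S / Id₂ := g1
        _ ≤ (((P + ((-c₂) • A + Pm)) + P).card * S / Ic₁) * S / Id₂ := by gcongr
        _ ≤ ((Q * S / Ic₂) * S / Ic₁) * S / Id₂ := by gcongr
    have h1 : (((b₁ • A + (-b₂) • A) + (a₁ • A + (-a₂) • A)).card : ℝ)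
        ≤ (((-b₂) • A + (a₁ • A + (-a₂) • A)) + P).card * S / Ib₁ :=
      GaraevAux.nat_le_mul_div N7b hIb₁0
    have h2 : ((((-b₂) • A + (a₁ • A + (-a₂) • A)) + P).card : ℝ)
        ≤ ((a₁ • A + ((-a₂) • A + P)) + Pm).card * S / Ib₂ :=
      GaraevAux.nat_le_mul_div N7c hIb₂0
    have h3 : (((a₁ • A + ((-a₂) • A + P)) + Pm).card : ℝ)
        ≤ (((-a₂) • A + (P + Pm)) + P).card * S / Ia₁ :=
      GaraevAux.nat_le_mul_div N7d hIa₁0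
    have h4 : ((((-a₂) • A + (P + Pm)) + P).card : ℝ) ≤ Q * S / Ia₂ :=
      GaraevAux.nat_le_mul_div N7e hIa₂0
    have boundC : (C₂:ℝ) ≤ (((Q * S / Ia₂) * S / Ia₁) * S / Ib₂) * S / Ib₁ := by
      calc (C₂:ℝ) ≤ (((b₁ • A + (-b₂) • A) + (a₁ • A + (-a₂) • A)).card : ℝ) := by
            exact_mod_cast N7a
        _ ≤ (((-b₂) • A + (a₁ • A + (-a₂) • A)) + P).card * S / Ib₁ := h1
        _ ≤ (((a₁ • A + ((-a₂) • A + P)) + Pm).card * S / Ib₂) * S / Ib₁ := by gcongr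
        _ ≤ (((((-a₂) • A + (P + Pm)) + P).card * S / Ia₁) * S / Ib₂) * S / Ib₁ := by gcongr
        _ ≤ (((Q * S / Ia₂) * S / Ia₁) * S / Ib₂) * S / Ib₁ := by gcongr
    have hQR : (Q:ℝ) ≤ (S:ℝ)^4 / (a:ℝ)^3 := by
      rw [le_div_iff₀ (by positivity)]
      exact_mod_cast N8
    have hcalc : (t:ℝ) ≤ (S:ℝ)^17 /
        (((Ia₁:ℝ) * Ia₂ * Ib₁ * Ib₂ * Ic₁ * Ic₂ * Id₁ * Id₂) * (a:ℝ)^8) := by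
      calc (t:ℝ) ≤ m₁ * Y₁ / z₁ := e1
        _ ≤ m₁ * (m₂ * Y₂ / z₂) / z₁ := by gcongr
        _ ≤ m₁ * (m₂ * (m₂ * C₂ / z₂) / z₂) / z₁ := by gcongr
        _ = (m₁ / z₁) * ((m₂/z₂) * (m₂/z₂)) * C₂ := by
            field_simp
        _ ≤ ((M₁:ℝ)/Id₁) * (((S:ℝ)/a) * ((S:ℝ)/a)) * C₂ := by gcongr
        _ ≤ ((((Q * S / Ic₂) * S / Ic₁) * S / Id₂)/Id₁) * (((S:ℝ)/a) * ((S:ℝ)/a)) *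
              ((((Q * S / Ia₂) * S / Ia₁) * S / Ib₂) * S / Ib₁) := by gcongr
        _ ≤ (((((S:ℝ)^4/(a:ℝ)^3 * S / Ic₂) * S / Ic₁) * S / Id₂)/Id₁) *
              (((S:ℝ)/a) * ((S:ℝ)/a)) *
              (((((S:ℝ)^4/(a:ℝ)^3 * S / Ia₂) * S / Ia₁) * S / Ib₂) * S / Ib₁) := by gcongr
        _ = (S:ℝ)^17 / (((Ia₁:ℝ) * Ia₂ * Ib₁ * Ib₂ * Ic₁ * Ic₂ * Id₁ * Id₂) * (a:ℝ)^8) := by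
            field_simp
    have hNprod : N^8 ≤ (Ia₁:ℝ) * Ia₂ * Ib₁ * Ib₂ * Ic₁ * Ic₂ * Id₁ * Id₂ := by
      calc N^8 = ((((((N*N)*N)*N)*N)*N)*N)*N := by ring
        _ ≤ (Ia₁:ℝ) * Ia₂ * Ib₁ * Ib₂ * Ic₁ * Ic₂ * Id₁ * Id₂ := by gcongr
    have hden : (0:ℝ) < N^8 * (a:ℝ)^8 := by
      have := pow_pos hN0 8
      positivity
    refine hcalc.trans ?_
    gcongr
end

section
/- Let F be a finite field, A a nonempty finite subset of F, b₀ ∈ F with b₀ ≠ 0, N ≥ 1 a real number, and elements a_{ji} ∈ F for j = 1, 2, 3, 4 and i = 0, 1, each nonzero, such that |a_{ji}·A ∩ b₀·A| ≥ N for all j, i. Then |Σ_{i=0}^{1} Σ_{j=0}^{1} (−1)^{i+j} a_{1i} a_{2j}·A + Σ_{i=0}^{1} Σ_{j=0}^{1} (−1)^{i+j} a_{3i} a_{4j}·A| ≤ |A+A|^{32} / (N^{16} |A|^{15}), where the displayed set is the eight-fold signed sumset of the dilates (−1)^{i+j} a_{1i}a_{2j}·A and (−1)^{i+j} a_{3i}a_{4j}·A.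 -/
open Pointwise Finset

private lemma gce_card_smul {F : Type*} [Field F] [DecidableEq F] {c : F} (hc : c ≠ 0)
    (A : Finset F) : (c • A).card = A.card :=
  Finset.card_image_of_injective _ (MulAction.injective₀ hc)

private lemma gce_smul_add {F : Type*} [Field F] [DecidableEq F] (c : F) (A B : Finset F) :
    c • (A + B) = c • A + c • B := by
  ext x; simp [Finset.mem_add, Finset.mem_smul_finset]

private lemma gce_neg_smul {F : Type*} [Field F] [DecidableEq F] (c : F) (A : Finset F) :
    (-c) • A = -(c • A) := by
  apply Finset.coe_injective; push_cast
  exact Set.neg_smul_set (α := F) (β := F) c (A : Set F)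

/-- One Ruzsa-triangle step: replace the dilate `(e*a')•A` by `(e*b₀)•A` at the cost of a
factor `|A+A| / |a'•A ∩ b₀•A|`, using `D = e • (a'•A ∩ b₀•A)` as the intermediate set. -/
private lemma gce_step {F : Type*} [Field F] [DecidableEq F] (A Y : Finset F) (b₀ e a' : F)
    (he : e ≠ 0) (hea : e * a' ≠ 0) :
    (Y + (e * a') • A).card * (a' • A ∩ b₀ • A).card ≤
      (Y + (e * b₀) • A).card * (A + A).card := by
  have hD1 : e • (a' • A ∩ b₀ • A) ⊆ (e * a') • A := by
    rw [mul_smul]; exact Finset.smul_finset_subset_smul_finset inter_subset_left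
  have hD2 : e • (a' • A ∩ b₀ • A) ⊆ (e * b₀) • A := by
    rw [mul_smul]; exact Finset.smul_finset_subset_smul_finset inter_subset_right
  calc (Y + (e * a') • A).card * (a' • A ∩ b₀ • A).card
      = (Y + (e * a') • A).card * (e • (a' • A ∩ b₀ • A)).card := by
        rw [gce_card_smul he]
    _ ≤ (Y + e • (a' • A ∩ b₀ • A)).card * (e • (a' • A ∩ b₀ • A) + (e * a') • A).card :=
        Finset.ruzsa_triangle_inequality_add_add_add _ _ _
    _ ≤ (Y + (e * b₀) • A).card * ((e * a') • (A + A)).card := by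
        apply Nat.mul_le_mul
        · exact Finset.card_le_card (Finset.add_subset_add_left hD2)
        · apply Finset.card_le_card
          rw [gce_smul_add]
          exact Finset.add_subset_add_right hD1
    _ = (Y + (e * b₀) • A).card * (A + A).card := by rw [gce_card_smul hea]

/-- Two Ruzsa-triangle steps: replace the dilate `d•A = (ε*u*v)•A` by `d'•A = (ε*b₀²)•A` at the
cost of a factor `(|A+A|/N)²`. -/
private lemma gce_pair {F : Type*} [Field F] [DecidableEq F] (A : Finset F) (b₀ : F)
    (hb₀ : b₀ ≠ 0) (N : ℝ) (hN : 0 < N) (Y : Finset F) (ε u v d d' : F)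
    (hε : ε ≠ 0) (hu : u ≠ 0) (hv : v ≠ 0)
    (hd : d = ε * u * v) (hd' : d' = ε * (b₀ * b₀))
    (hNu : N ≤ ((u • A ∩ b₀ • A).card : ℝ)) (hNv : N ≤ ((v • A ∩ b₀ • A).card : ℝ)) :
    ((d • A + Y).card : ℝ) ≤ ((d' • A + Y).card : ℝ) * (((A + A).card : ℝ) / N) ^ 2 := by
  have he1 : ε * u ≠ 0 := mul_ne_zero hε hu
  have he2 : ε * b₀ ≠ 0 := mul_ne_zero hε hb₀
  have hstep1 := gce_step A Y b₀ (ε * u) v he1 (mul_ne_zero he1 hv)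
  have hstep2 := gce_step A Y b₀ (ε * b₀) u he2 (mul_ne_zero he2 hu)
  rw [← hd] at hstep1
  have hmid : ε * u * b₀ = ε * b₀ * u := by ring
  rw [hmid] at hstep1
  have hlast : ε * b₀ * b₀ = d' := by rw [hd']; ring
  rw [hlast] at hstep2
  have key : ∀ (U V : Finset F) (I : Finset F),
      N ≤ ((I.card : ℝ)) → U.card * I.card ≤ V.card * (A + A).card →
      ((U.card : ℝ)) ≤ (V.card : ℝ) * (((A + A).card : ℝ) / N) := by
    intro U V I hNI h
    rw [← mul_div_assoc, le_div_iff₀ hN]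
    calc ((U.card : ℝ)) * N ≤ (U.card : ℝ) * (I.card : ℝ) :=
          mul_le_mul_of_nonneg_left hNI (Nat.cast_nonneg _)
      _ ≤ (V.card : ℝ) * ((A + A).card : ℝ) := by exact_mod_cast h
  have k1 := key _ _ _ hNv hstep1
  have k2 := key _ _ _ hNu hstep2
  rw [add_comm (d • A) Y, add_comm (d' • A) Y]
  calc ((Y + d • A).card : ℝ)
      ≤ ((Y + (ε * b₀ * u) • A).card : ℝ) * (((A + A).card : ℝ) / N) := k1
    _ ≤ (((Y + d' • A).card : ℝ) * (((A + A).card : ℝ) / N)) * (((A + A).card : ℝ) / N) :=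
        mul_le_mul_of_nonneg_right k2 (div_nonneg (Nat.cast_nonneg _) hN.le)
    _ = ((Y + d' • A).card : ℝ) * (((A + A).card : ℝ) / N) ^ 2 := by ring


/-- Rotating the head of a right-associated eight-fold sum to the back. -/
private lemma gce_rot {G : Type*} [AddCommMonoid G] (c x₁ x₂ x₃ x₄ x₅ x₆ x₇ : G) :
    c + (x₁ + (x₂ + (x₃ + (x₄ + (x₅ + (x₆ + x₇)))))) =
      x₁ + (x₂ + (x₃ + (x₄ + (x₅ + (x₆ + (x₇ + c)))))) := by abel

set_option maxHeartbeats 2000000 in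
/-- Key estimate in the third case of the Main Theorem: the eight-fold signed sumset
`Σᵢⱼ(−1)^{i+j} a₁ᵢa₂ⱼ A + Σᵢⱼ(−1)^{i+j} a₃ᵢa₄ⱼ A` has cardinality at most
`|A+A|³² / (N¹⁶|A|¹⁵)`. Here `a₁₀, a₁₁, …, a₄₁` play the roles of `a_{ji}`. -/
theorem garaev_case_three_estimate {F : Type*} [Field F] [Fintype F] [DecidableEq F]
    (A : Finset F) (hA : A.Nonempty) (b₀ : F) (hb₀ : b₀ ≠ 0) (N : ℝ) (hN : 1 ≤ N)
    (a₁₀ a₁₁ a₂₀ a₂₁ a₃₀ a₃₁ a₄₀ a₄₁ : F)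
    (h₁₀ : a₁₀ ≠ 0) (h₁₁ : a₁₁ ≠ 0) (h₂₀ : a₂₀ ≠ 0) (h₂₁ : a₂₁ ≠ 0)
    (h₃₀ : a₃₀ ≠ 0) (h₃₁ : a₃₁ ≠ 0) (h₄₀ : a₄₀ ≠ 0) (h₄₁ : a₄₁ ≠ 0)
    (hc₁₀ : N ≤ ((a₁₀ • A ∩ b₀ • A).card : ℝ)) (hc₁₁ : N ≤ ((a₁₁ • A ∩ b₀ • A).card : ℝ))
    (hc₂₀ : N ≤ ((a₂₀ • A ∩ b₀ • A).card : ℝ)) (hc₂₁ : N ≤ ((a₂₁ • A ∩ b₀ • A).card : ℝ))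
    (hc₃₀ : N ≤ ((a₃₀ • A ∩ b₀ • A).card : ℝ)) (hc₃₁ : N ≤ ((a₃₁ • A ∩ b₀ • A).card : ℝ))
    (hc₄₀ : N ≤ ((a₄₀ • A ∩ b₀ • A).card : ℝ)) (hc₄₁ : N ≤ ((a₄₁ • A ∩ b₀ • A).card : ℝ)) :
    (((a₁₀ * a₂₀) • A - (a₁₀ * a₂₁) • A - (a₁₁ * a₂₀) • A + (a₁₁ * a₂₁) • A +
        ((a₃₀ * a₄₀) • A - (a₃₀ * a₄₁) • A - (a₃₁ * a₄₀) • A + (a₃₁ * a₄₁) • A)).card : ℝ) ≤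
      ((A + A).card : ℝ) ^ 32 / (N ^ 16 * (A.card : ℝ) ^ 15) := by
  have hN0 : (0 : ℝ) < N := lt_of_lt_of_le one_pos hN
  have ha0 : (0 : ℝ) < (A.card : ℝ) := by exact_mod_cast hA.card_pos
  have haC : ((A.card : ℝ)) ≤ ((A + A).card : ℝ) := by
    exact_mod_cast Finset.card_le_card_add_left (t := A) hA
  have hC0 : (0 : ℝ) < ((A + A).card : ℝ) := lt_of_lt_of_le ha0 haC
  have hP0 : (0 : ℝ) ≤ ((A + A).card : ℝ) / N := div_nonneg hC0.le hN0.le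
  have hbb : b₀ * b₀ ≠ 0 := mul_ne_zero hb₀ hb₀
  have hsub : ∀ (X : Finset F) (c : F), X - c • A = X + (-c) • A := by
    intro X c
    rw [sub_eq_add_neg, gce_neg_smul]
  obtain ⟨B, hB⟩ : ∃ B : Finset F, B = (b₀ * b₀) • A := ⟨_, rfl⟩
  obtain ⟨M, hM⟩ : ∃ M : Finset F, M = (-(b₀ * b₀)) • A := ⟨_, rfl⟩
  -- Step 0: rewrite the signed sumset as a right-associated sum of eight dilates.
  have h0 : ((a₁₀ * a₂₀) • A - (a₁₀ * a₂₁) • A - (a₁₁ * a₂₀) • A + (a₁₁ * a₂₁) • A +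
        ((a₃₀ * a₄₀) • A - (a₃₀ * a₄₁) • A - (a₃₁ * a₄₀) • A + (a₃₁ * a₄₁) • A)) =
      (a₁₀ * a₂₀) • A + ((-(a₁₀ * a₂₁)) • A + ((-(a₁₁ * a₂₀)) • A + ((a₁₁ * a₂₁) • A +
        ((a₃₀ * a₄₀) • A + ((-(a₃₀ * a₄₁)) • A + ((-(a₃₁ * a₄₀)) • A + (a₃₁ * a₄₁) • A)))))) := by
    rw [hsub, hsub, hsub, hsub]
    abel
  rw [h0]
  -- Eight rounds, each replacing one dilate by `±b₀²•A` at cost `(|A+A|/N)²`.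
  have H1 := gce_pair A b₀ hb₀ N hN0
      ((-(a₁₀ * a₂₁)) • A + ((-(a₁₁ * a₂₀)) • A + ((a₁₁ * a₂₁) • A +
        ((a₃₀ * a₄₀) • A + ((-(a₃₀ * a₄₁)) • A + ((-(a₃₁ * a₄₀)) • A + (a₃₁ * a₄₁) • A))))))
      1 a₁₀ a₂₀ (a₁₀ * a₂₀) (b₀ * b₀) one_ne_zero h₁₀ h₂₀ (by ring) (by ring) hc₁₀ hc₂₀
  rw [← hB] at H1
  have H2 := gce_pair A b₀ hb₀ N hN0
      ((-(a₁₁ * a₂₀)) • A + ((a₁₁ * a₂₁) • A +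
        ((a₃₀ * a₄₀) • A + ((-(a₃₀ * a₄₁)) • A + ((-(a₃₁ * a₄₀)) • A + ((a₃₁ * a₄₁) • A + B))))))
      (-1) a₁₀ a₂₁ (-(a₁₀ * a₂₁)) (-(b₀ * b₀)) (neg_ne_zero.2 one_ne_zero) h₁₀ h₂₁
      (by ring) (by ring) hc₁₀ hc₂₁
  rw [← hM] at H2
  have H3 := gce_pair A b₀ hb₀ N hN0
      ((a₁₁ * a₂₁) • A + ((a₃₀ * a₄₀) • A + ((-(a₃₀ * a₄₁)) • A + ((-(a₃₁ * a₄₀)) • A +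
        ((a₃₁ * a₄₁) • A + (B + M))))))
      (-1) a₁₁ a₂₀ (-(a₁₁ * a₂₀)) (-(b₀ * b₀)) (neg_ne_zero.2 one_ne_zero) h₁₁ h₂₀
      (by ring) (by ring) hc₁₁ hc₂₀
  rw [← hM] at H3
  have H4 := gce_pair A b₀ hb₀ N hN0
      ((a₃₀ * a₄₀) • A + ((-(a₃₀ * a₄₁)) • A + ((-(a₃₁ * a₄₀)) • A + ((a₃₁ * a₄₁) • A +
        (B + (M + M))))))
      1 a₁₁ a₂₁ (a₁₁ * a₂₁) (b₀ * b₀) one_ne_zero h₁₁ h₂₁ (by ring) (by ring) hc₁₁ hc₂₁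
  rw [← hB] at H4
  have H5 := gce_pair A b₀ hb₀ N hN0
      ((-(a₃₀ * a₄₁)) • A + ((-(a₃₁ * a₄₀)) • A + ((a₃₁ * a₄₁) • A + (B + (M + (M + B))))))
      1 a₃₀ a₄₀ (a₃₀ * a₄₀) (b₀ * b₀) one_ne_zero h₃₀ h₄₀ (by ring) (by ring) hc₃₀ hc₄₀
  rw [← hB] at H5
  have H6 := gce_pair A b₀ hb₀ N hN0
      ((-(a₃₁ * a₄₀)) • A + ((a₃₁ * a₄₁) • A + (B + (M + (M + (B + B))))))
      (-1) a₃₀ a₄₁ (-(a₃₀ * a₄₁)) (-(b₀ * b₀)) (neg_ne_zero.2 one_ne_zero) h₃₀ h₄₁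
      (by ring) (by ring) hc₃₀ hc₄₁
  rw [← hM] at H6
  have H7 := gce_pair A b₀ hb₀ N hN0
      ((a₃₁ * a₄₁) • A + (B + (M + (M + (B + (B + M))))))
      (-1) a₃₁ a₄₀ (-(a₃₁ * a₄₀)) (-(b₀ * b₀)) (neg_ne_zero.2 one_ne_zero) h₃₁ h₄₀
      (by ring) (by ring) hc₃₁ hc₄₀
  rw [← hM] at H7
  have H8 := gce_pair A b₀ hb₀ N hN0
      (B + (M + (M + (B + (B + (M + M))))))
      1 a₃₁ a₄₁ (a₃₁ * a₄₁) (b₀ * b₀) one_ne_zero h₃₁ h₄₁ (by ring) (by ring) hc₃₁ hc₄₁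
  rw [← hB] at H8
  -- The core after all replacements.
  obtain ⟨core, hcoredef⟩ : ∃ C₀ : Finset F,
      C₀ = B + (B + (M + (M + (B + (B + (M + M)))))) := ⟨_, rfl⟩
  rw [← hcoredef] at H8
  have Hchain : (((a₁₀ * a₂₀) • A + ((-(a₁₀ * a₂₁)) • A + ((-(a₁₁ * a₂₀)) • A + ((a₁₁ * a₂₁) • A +
        ((a₃₀ * a₄₀) • A + ((-(a₃₀ * a₄₁)) • A + ((-(a₃₁ * a₄₀)) • A +
        (a₃₁ * a₄₁) • A))))))).card : ℝ) ≤
      ((core.card : ℝ)) * (((A + A).card : ℝ) / N) ^ 16 := by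
    calc (((a₁₀ * a₂₀) • A + ((-(a₁₀ * a₂₁)) • A + ((-(a₁₁ * a₂₀)) • A + ((a₁₁ * a₂₁) • A +
          ((a₃₀ * a₄₀) • A + ((-(a₃₀ * a₄₁)) • A + ((-(a₃₁ * a₄₀)) • A +
          (a₃₁ * a₄₁) • A))))))).card : ℝ)
        ≤ ((B + ((-(a₁₀ * a₂₁)) • A + ((-(a₁₁ * a₂₀)) • A + ((a₁₁ * a₂₁) • A +
          ((a₃₀ * a₄₀) • A + ((-(a₃₀ * a₄₁)) • A + ((-(a₃₁ * a₄₀)) • A +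
          (a₃₁ * a₄₁) • A))))))).card : ℝ) * (((A + A).card : ℝ) / N) ^ 2 := H1
      _ = (((-(a₁₀ * a₂₁)) • A + ((-(a₁₁ * a₂₀)) • A + ((a₁₁ * a₂₁) • A +
          ((a₃₀ * a₄₀) • A + ((-(a₃₀ * a₄₁)) • A + ((-(a₃₁ * a₄₀)) • A +
          ((a₃₁ * a₄₁) • A + B))))))).card : ℝ) * (((A + A).card : ℝ) / N) ^ 2 := by
          rw [gce_rot]
      _ ≤ (((-(a₁₁ * a₂₀)) • A + ((a₁₁ * a₂₁) • A +
          ((a₃₀ * a₄₀) • A + ((-(a₃₀ * a₄₁)) • A + ((-(a₃₁ * a₄₀)) • A +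
          ((a₃₁ * a₄₁) • A + (B + M))))))).card : ℝ) * (((A + A).card : ℝ) / N) ^ 4 := by
          have := mul_le_mul_of_nonneg_right H2 (pow_nonneg hP0 2)
          calc _ ≤ _ := this
            _ = _ := by
              rw [gce_rot]
              ring
      _ ≤ (((a₁₁ * a₂₁) • A + ((a₃₀ * a₄₀) • A + ((-(a₃₀ * a₄₁)) • A + ((-(a₃₁ * a₄₀)) • A +
          ((a₃₁ * a₄₁) • A + (B + (M + M))))))).card : ℝ) * (((A + A).card : ℝ) / N) ^ 6 := by
          have := mul_le_mul_of_nonneg_right H3 (pow_nonneg hP0 4)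
          calc _ ≤ _ := this
            _ = _ := by
              rw [gce_rot]
              ring
      _ ≤ (((a₃₀ * a₄₀) • A + ((-(a₃₀ * a₄₁)) • A + ((-(a₃₁ * a₄₀)) • A + ((a₃₁ * a₄₁) • A +
          (B + (M + (M + B))))))).card : ℝ) * (((A + A).card : ℝ) / N) ^ 8 := by
          have := mul_le_mul_of_nonneg_right H4 (pow_nonneg hP0 6)
          calc _ ≤ _ := this
            _ = _ := by
              rw [gce_rot]
              ring
      _ ≤ (((-(a₃₀ * a₄₁)) • A + ((-(a₃₁ * a₄₀)) • A + ((a₃₁ * a₄₁) • A +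
          (B + (M + (M + (B + B))))))).card : ℝ) * (((A + A).card : ℝ) / N) ^ 10 := by
          have := mul_le_mul_of_nonneg_right H5 (pow_nonneg hP0 8)
          calc _ ≤ _ := this
            _ = _ := by
              rw [gce_rot]
              ring
      _ ≤ (((-(a₃₁ * a₄₀)) • A + ((a₃₁ * a₄₁) • A +
          (B + (M + (M + (B + (B + M))))))).card : ℝ) * (((A + A).card : ℝ) / N) ^ 12 := by
          have := mul_le_mul_of_nonneg_right H6 (pow_nonneg hP0 10)
          calc _ ≤ _ := this
            _ = _ := by
              rw [gce_rot]
              ring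
      _ ≤ (((a₃₁ * a₄₁) • A +
          (B + (M + (M + (B + (B + (M + M))))))).card : ℝ) * (((A + A).card : ℝ) / N) ^ 14 := by
          have := mul_le_mul_of_nonneg_right H7 (pow_nonneg hP0 12)
          calc _ ≤ _ := this
            _ = _ := by
              rw [gce_rot]
              ring
      _ ≤ ((core.card : ℝ)) * (((A + A).card : ℝ) / N) ^ 16 := by
          have := mul_le_mul_of_nonneg_right H8 (pow_nonneg hP0 14)
          calc _ ≤ _ := this
            _ = _ := by rw [hcoredef]; ring
  -- Bound the core via the Plünnecke–Ruzsa inequality.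
  have hBne : B.Nonempty := by rw [hB]; exact hA.smul_finset
  have hcore_eq : core = (4 : ℕ) • B - (4 : ℕ) • B := by
    have h4 : (4 : ℕ) • B = B + (B + (B + B)) := by
      rw [succ_nsmul, succ_nsmul, succ_nsmul, one_nsmul]; abel
    have hMB : M = -B := by rw [hM, hB, gce_neg_smul]
    rw [hcoredef, hMB, h4, sub_eq_add_neg, neg_add, neg_add, neg_add]
    generalize (-B : Finset F) = M'
    abel
  have hBB : (B + B).card = (A + A).card := by
    rw [hB, ← gce_smul_add, gce_card_smul hbb]
  have hBcard : B.card = A.card := by rw [hB]; exact gce_card_smul hbb A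
  have hcore_bound : ((core.card : ℝ)) ≤
      (((A + A).card : ℝ) / (A.card : ℝ)) ^ 8 * (A.card : ℝ) := by
    have hplu := Finset.pluennecke_ruzsa_inequality_nsmul_sub_nsmul_add (A := B) hBne B 4 4
    have h2 := (NNRat.cast_le (K := ℝ)).2 hplu
    push_cast at h2
    -- (4 + 4) is already reduced to 8 by push_cast
    rw [hBB, hBcard] at h2
    rw [hcore_eq]
    exact h2
  -- Put everything together.
  have hfinal : ((core.card : ℝ)) * (((A + A).card : ℝ) / N) ^ 16 ≤
      ((A + A).card : ℝ) ^ 32 / (N ^ 16 * (A.card : ℝ) ^ 15) := by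
    have h1 : ((core.card : ℝ)) * (((A + A).card : ℝ) / N) ^ 16 ≤
        ((((A + A).card : ℝ) / (A.card : ℝ)) ^ 8 * (A.card : ℝ)) *
          (((A + A).card : ℝ) / N) ^ 16 :=
      mul_le_mul_of_nonneg_right hcore_bound (pow_nonneg hP0 16)
    refine h1.trans ?_
    have h2 : ((((A + A).card : ℝ) / (A.card : ℝ)) ^ 8 * (A.card : ℝ)) *
        (((A + A).card : ℝ) / N) ^ 16 =
        ((A + A).card : ℝ) ^ 24 / ((A.card : ℝ) ^ 7 * N ^ 16) := by
      field_simp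
    rw [h2, div_le_div_iff₀ (by positivity) (by positivity)]
    have hC8 : ((A.card : ℝ)) ^ 8 ≤ ((A + A).card : ℝ) ^ 8 := pow_le_pow_left₀ ha0.le haC 8
    calc ((A + A).card : ℝ) ^ 24 * (N ^ 16 * (A.card : ℝ) ^ 15) =
        (((A + A).card : ℝ) ^ 24 * N ^ 16 * (A.card : ℝ) ^ 7) * (A.card : ℝ) ^ 8 := by ring
      _ ≤ (((A + A).card : ℝ) ^ 24 * N ^ 16 * (A.card : ℝ) ^ 7) * ((A + A).card : ℝ) ^ 8 :=
          mul_le_mul_of_nonneg_left hC8 (by positivity)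
      _ = ((A + A).card : ℝ) ^ 32 * ((A.card : ℝ) ^ 7 * N ^ 16) := by ring
  exact Hchain.trans hfinal
end

section
/- Let F be a finite field and A a finite subset of F with |A| ≥ 2. If |(A−A)/(A−A)| ≥ |A|², then there exists x ∈ F such that |A + x·A| ≥ |A|²/2. -/
open Pointwise Finset

/-- Pigeonhole step in Lemma 1.1: if `|(A-A)/(A-A)| ≥ |A|²`, then there is `x ∈ F`
with `|A + xA| ≥ |A|²/2`. -/
theorem garaev_pigeonhole_ratio {F : Type*} [Field F] [Fintype F] [DecidableEq F]
    (A : Finset F) (hA : 2 ≤ A.card)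
    (hR : A.card ^ 2 ≤ ((A - A) / ((A - A).erase 0)).card) :
    ∃ x : F, (A.card : ℝ) ^ 2 / 2 ≤ ((A + x • A).card : ℝ) := by
  classical
  set n := A.card with hn
  set R := (A - A) / ((A - A).erase 0) with hRdef
  set T : Finset (F × F) := A ×ˢ A with hT
  set U : Finset ((F × F) × (F × F)) := T ×ˢ T with hUdef
  have hUcard : U.card = n ^ 4 := by
    simp only [hUdef, hT, Finset.card_product, hn]; ring
  set Q : F → Finset ((F × F) × (F × F)) := fun x =>
    U.filter (fun p => p.2.2 - p.1.2 ≠ 0 ∧ p.1.1 - p.2.1 = x * (p.2.2 - p.1.2)) with hQdef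
  -- the Q x for x ∈ R are pairwise disjoint subsets of U
  have hdisj : ∀ x ∈ R, ∀ y ∈ R, x ≠ y → Disjoint (Q x) (Q y) := by
    intro x _ y _ hxy
    rw [Finset.disjoint_left]
    intro p hpx hpy
    simp only [hQdef, Finset.mem_filter] at hpx hpy
    exact hxy (mul_right_cancel₀ hpx.2.1 (hpx.2.2 ▸ hpy.2.2))
  have hsum : ∑ x ∈ R, (Q x).card ≤ n ^ 4 := by
    rw [← Finset.card_biUnion hdisj, ← hUcard]
    exact Finset.card_le_card (Finset.biUnion_subset.2 fun x _ => Finset.filter_subset _ _)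
  -- pigeonhole: some x ∈ R has few representations
  have hex : ∃ x ∈ R, (Q x).card ≤ n ^ 2 := by
    by_contra h
    push_neg at h
    have h1 : R.card * (n ^ 2 + 1) ≤ ∑ x ∈ R, (Q x).card := by
      calc R.card * (n ^ 2 + 1) = ∑ _x ∈ R, (n ^ 2 + 1) := by rw [Finset.sum_const, smul_eq_mul]
        _ ≤ ∑ x ∈ R, (Q x).card := Finset.sum_le_sum fun x hx => h x hx
    have h2 : n ^ 2 * (n ^ 2 + 1) ≤ R.card * (n ^ 2 + 1) := by
      exact Nat.mul_le_mul_right _ hR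
    have hn2 : 1 ≤ n ^ 2 := Nat.one_le_pow _ _ (by omega)
    have h3 : n ^ 2 * (n ^ 2 + 1) ≤ n ^ 4 := le_trans h2 (le_trans h1 hsum)
    have h4 : n ^ 2 * (n ^ 2 + 1) = n ^ 2 * n ^ 2 + n ^ 2 := by ring
    have h5 : n ^ 4 = n ^ 2 * n ^ 2 := by ring
    omega
  obtain ⟨x, hxR, hQx⟩ := hex
  refine ⟨x, ?_⟩
  set S : Finset F := A + x • A with hS
  set φ : F × F → F := fun p => p.1 + x * p.2 with hφ
  have hmaps : ∀ p ∈ T, φ p ∈ S := by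
    intro p hp
    simp only [hT, Finset.mem_product] at hp
    exact Finset.add_mem_add hp.1 (Finset.smul_mem_smul_finset hp.2)
  set f : F → ℕ := fun c => (T.filter (fun p => φ p = c)).card with hf
  have hsum1 : ∑ c ∈ S, f c = n ^ 2 := by
    rw [← Finset.card_eq_sum_card_fiberwise hmaps]
    simp only [hT, Finset.card_product, hn]; ring
  -- the collision set
  set P : Finset ((F × F) × (F × F)) := U.filter (fun p => φ p.1 = φ p.2) with hP
  have hPmaps : ∀ p ∈ P, φ p.1 ∈ S := by
    intro p hp
    simp only [hP, hUdef, Finset.mem_filter, Finset.mem_product] at hp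
    exact hmaps _ hp.1.1
  have hPsum : P.card = ∑ c ∈ S, f c ^ 2 := by
    rw [Finset.card_eq_sum_card_fiberwise hPmaps]
    refine Finset.sum_congr rfl fun c _ => ?_
    have : P.filter (fun p => φ p.1 = c) =
        (T.filter (fun p => φ p = c)) ×ˢ (T.filter (fun p => φ p = c)) := by
      rw [← Finset.filter_product]
      ext p
      simp only [hP, hUdef, Finset.mem_filter, Finset.mem_product]
      constructor
      · rintro ⟨⟨⟨h1, h2⟩, h3⟩, h4⟩; exact ⟨⟨h1, h2⟩, h4, h3 ▸ h4⟩
      · rintro ⟨⟨h1, h2⟩, h3, h4⟩; exact ⟨⟨⟨h1, h2⟩, h3.trans h4.symm⟩, h3⟩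
    rw [this, Finset.card_product, hf, sq]
  -- bound the collision set
  have hPle : P.card ≤ 2 * n ^ 2 := by
    have hsplit := Finset.card_filter_add_card_filter_not
      (s := P) (p := fun p => p.1.2 = p.2.2)
    have hd : (P.filter (fun p => p.1.2 = p.2.2)).card ≤ n ^ 2 := by
      have : ∀ p ∈ P.filter (fun p => p.1.2 = p.2.2), p.1 ∈ T := by
        intro p hp
        simp only [hP, hUdef, Finset.mem_filter, Finset.mem_product] at hp
        exact hp.1.1.1
      calc (P.filter (fun p => p.1.2 = p.2.2)).card ≤ T.card := by
            apply Finset.card_le_card_of_injOn (fun p => p.1) (fun p hp => this p hp)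
            intro p hp q hq hpq
            simp only [hP, hUdef, hφ, Finset.mem_coe, Finset.mem_filter] at hp hq
            have hp2 : p.1 = p.2 := by
              have hb := hp.2
              have := hp.1.2
              have ha : p.1.1 = p.2.1 := by
                have := hp.1.2
                rw [hb] at this
                exact add_right_cancel this
              exact Prod.ext ha hb
            have hq2 : q.1 = q.2 := by
              have hb := hq.2
              have ha : q.1.1 = q.2.1 := by
                have := hq.1.2
                rw [hb] at this
                exact add_right_cancel this
              exact Prod.ext ha hb
            have hpq' : p.1 = q.1 := hpq
            calc p = (p.1, p.2) := rfl
              _ = (q.1, q.2) := by rw [← hp2, ← hq2, hpq']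
              _ = q := rfl
        _ = n ^ 2 := by simp only [hT, Finset.card_product, hn]; ring
    have hnd : (P.filter (fun p => ¬ p.1.2 = p.2.2)).card ≤ n ^ 2 := by
      refine le_trans (Finset.card_le_card ?_) hQx
      intro p hp
      simp only [hP, hQdef, Finset.mem_filter, hφ] at hp ⊢
      refine ⟨hp.1.1, sub_ne_zero_of_ne (Ne.symm hp.2), ?_⟩
      have := hp.1.2
      linear_combination this
    omega
  -- Cauchy–Schwarz
  have hCS : ((∑ c ∈ S, (f c : ℝ)) ^ 2) ≤ S.card * ∑ c ∈ S, (f c : ℝ) ^ 2 :=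
    sq_sum_le_card_mul_sum_sq
  have h1 : ((n : ℝ) ^ 2) ^ 2 ≤ S.card * (2 * n ^ 2) := by
    have e1 : ∑ c ∈ S, (f c : ℝ) = (n : ℝ) ^ 2 := by
      rw [← Nat.cast_sum, hsum1]; push_cast; ring
    have e2 : ∑ c ∈ S, (f c : ℝ) ^ 2 ≤ 2 * (n : ℝ) ^ 2 := by
      have : ((∑ c ∈ S, f c ^ 2 : ℕ) : ℝ) ≤ ((2 * n ^ 2 : ℕ) : ℝ) := by
        exact_mod_cast hPsum ▸ hPle
      push_cast at this
      convert this using 2 <;> push_cast <;> ring_nf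
    calc ((n : ℝ) ^ 2) ^ 2 = (∑ c ∈ S, (f c : ℝ)) ^ 2 := by rw [e1]
      _ ≤ S.card * ∑ c ∈ S, (f c : ℝ) ^ 2 := hCS
      _ ≤ S.card * (2 * n ^ 2) := by
          apply mul_le_mul_of_nonneg_left e2 (by positivity)
  have hn0 : (0 : ℝ) < (n : ℝ) ^ 2 := by
    have : 0 < n := by omega
    positivity
  rw [div_le_iff₀ (by norm_num : (0:ℝ) < 2)]
  nlinarith [h1]
end
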